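/- arXiv:2004.06310 — 8 statements merged into one kernel-verified Lean document; each statement's English description precedes it below -/
import Mathlib

section
/- Let m ≥ 4 be an integer and Q̃_{2,m} := 2·∫₀^∞ t²/(1 + t^m) dt. For every κ > 0 and R > 0 there exists a constant C > 0, depending only on κ, R, m, such that for all ε ∈ (0, 1/2): |∫_{−R}^{R} x²/(ε + κ·|x|^m) dx − Q̃_{2,m}·κ^{−3/m}·ε^{−(1−3/m)}| ≤ C. -/
open MeasureTheory intervalIntegral

lemma stmt4_f_le (m : ℕ) {t : ℝ} (ht : 0 < t) :
    t ^ 2 / (1 + t ^ m) ≤ t ^ ((2:ℝ) - m) := by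
  have h1 : t ^ ((2:ℝ) - m) = t ^ 2 / t ^ m := by
    rw [show (2:ℝ) = ((2:ℕ):ℝ) by norm_cast, Real.rpow_sub ht, Real.rpow_natCast,
      Real.rpow_natCast]
  rw [h1]
  have hpm : 0 < t ^ m := pow_pos ht m
  gcongr
  all_goals linarith

lemma stmt4_f_nonneg (m : ℕ) {t : ℝ} (ht : 0 < t) : 0 ≤ t ^ 2 / (1 + t ^ m) := by
  have hpm : 0 < t ^ m := pow_pos ht m
  have : (0:ℝ) < 1 + t ^ m := by linarith
  positivity

lemma stmt4_integrable (m : ℕ) (hm : 4 ≤ m) :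
    IntegrableOn (fun t : ℝ => t ^ 2 / (1 + t ^ m)) (Set.Ioi 0) := by
  have hmR : (4:ℝ) ≤ m := by exact_mod_cast hm
  have hmeas : Measurable (fun t : ℝ => t ^ 2 / (1 + t ^ m)) := by measurability
  rw [show Set.Ioi (0:ℝ) = Set.Ioc 0 1 ∪ Set.Ioi 1 by
    rw [Set.Ioc_union_Ioi_eq_Ioi]; norm_num]
  apply MeasureTheory.IntegrableOn.union
  · have hcont : ContinuousOn (fun t : ℝ => t ^ 2 / (1 + t ^ m)) (Set.Icc 0 1) := by
      apply ContinuousOn.div (by fun_prop) (by fun_prop)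
      intro x hx
      have h0 : (0:ℝ) ≤ x ^ m := pow_nonneg hx.1 m
      exact ne_of_gt (by linarith)
    exact hcont.integrableOn_Icc.mono_set Set.Ioc_subset_Icc_self
  · refine MeasureTheory.Integrable.mono'
      (integrableOn_Ioi_rpow_of_lt (by linarith : (2:ℝ) - m < -1) one_pos)
      hmeas.aestronglyMeasurable.restrict ?_
    refine (ae_restrict_iff' measurableSet_Ioi).2 (Filter.Eventually.of_forall fun t ht => ?_)
    have ht0 : (0:ℝ) < t := lt_trans one_pos ht
    rw [Real.norm_eq_abs, abs_of_nonneg (stmt4_f_nonneg m ht0)]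
    exact stmt4_f_le m ht0

lemma stmt4_tail (m : ℕ) (hm : 4 ≤ m) {T : ℝ} (hT : 0 < T) :
    ∫ t in Set.Ioi T, t ^ 2 / (1 + t ^ m) ≤ T ^ ((3:ℝ) - m) / ((m:ℝ) - 3) := by
  have hmR : (4:ℝ) ≤ m := by exact_mod_cast hm
  have h2 : ((2:ℝ) - m) < -1 := by linarith
  have key : ∫ t in Set.Ioi T, t ^ 2 / (1 + t ^ m) ≤ ∫ t in Set.Ioi T, t ^ ((2:ℝ) - m) := by
    refine MeasureTheory.setIntegral_mono_on
      ((stmt4_integrable m hm).mono_set (Set.Ioi_subset_Ioi hT.le))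
      (integrableOn_Ioi_rpow_of_lt h2 hT) measurableSet_Ioi
      (fun t ht => stmt4_f_le m (hT.trans ht))
  rw [integral_Ioi_rpow_of_lt h2 hT, show (2:ℝ) - m + 1 = 3 - m by ring] at key
  rw [show -T ^ ((3:ℝ) - m) / ((3:ℝ) - m) = T ^ ((3:ℝ) - m) / ((m:ℝ) - 3) by
    rw [show (3:ℝ) - m = -((m:ℝ) - 3) by ring, div_neg, neg_div, neg_neg]] at key
  exact key

/-- Let `m ≥ 4` and `Q̃_{2,m} := 2∫₀^∞ t²/(1 + t^m) dt`. For every `κ > 0`, `R > 0` there is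
`C > 0` (depending only on `κ, R, m`) such that for all `ε ∈ (0, 1/2)`:
`|∫_{−R}^{R} x²/(ε + κ·|x|^m) dx − Q̃_{2,m}·κ^{−3/m}·ε^{−(1−3/m)}| ≤ C`. -/
theorem stmt4 (m : ℕ) (hm : 4 ≤ m) (κ R : ℝ) (hκ : 0 < κ) (hR : 0 < R) :
    ∃ C > 0, ∀ ε : ℝ, 0 < ε → ε < 1/2 →
      |(∫ x in (-R)..R, x ^ 2 / (ε + κ * |x| ^ m)) -
          (2 * ∫ t in Set.Ioi (0 : ℝ), t ^ 2 / (1 + t ^ m)) *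
            κ ^ (-(3 / (m : ℝ))) * ε ^ (-(1 - 3 / (m : ℝ)))| ≤ C := by
  have hmR : (4:ℝ) ≤ m := by exact_mod_cast hm
  have hm0 : m ≠ 0 := by omega
  have hm3 : (0:ℝ) < (m:ℝ) - 3 := by linarith
  refine ⟨2 * R ^ ((3:ℝ) - m) / (((m:ℝ) - 3) * κ), ?_, ?_⟩
  · exact div_pos (mul_pos two_pos (Real.rpow_pos_of_pos hR _)) (mul_pos hm3 hκ)
  intro ε hε hε2
  have hεκ : 0 < ε / κ := div_pos hε hκ
  set c : ℝ := (ε / κ) ^ ((m:ℝ)⁻¹) with hc_def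
  have hc : 0 < c := Real.rpow_pos_of_pos hεκ _
  have hcm : c ^ m = ε / κ := Real.rpow_inv_natCast_pow hεκ.le hm0
  -- continuity of the integrand
  have hg_cont : Continuous (fun x : ℝ => x ^ 2 / (ε + κ * |x| ^ m)) := by
    apply Continuous.div (by fun_prop) (by fun_prop)
    intro x
    have h1 : 0 ≤ κ * |x| ^ m := mul_nonneg hκ.le (pow_nonneg (abs_nonneg x) m)
    exact ne_of_gt (by linarith)
  -- symmetry
  have hsym : (∫ x in (-R)..R, x ^ 2 / (ε + κ * |x| ^ m))
      = 2 * ∫ x in (0:ℝ)..R, x ^ 2 / (ε + κ * |x| ^ m) := by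
    have h1 : (∫ x in (-R)..(0:ℝ), x ^ 2 / (ε + κ * |x| ^ m))
        = ∫ x in (0:ℝ)..R, x ^ 2 / (ε + κ * |x| ^ m) := by
      have h2 := intervalIntegral.integral_comp_neg (a := 0) (b := R)
        (fun x : ℝ => x ^ 2 / (ε + κ * |x| ^ m))
      simp only [neg_zero] at h2
      rw [← h2]
      apply intervalIntegral.integral_congr
      intro x _
      simp [neg_sq, abs_neg]
    rw [← intervalIntegral.integral_add_adjacent_intervals
      (hg_cont.intervalIntegrable (-R) 0) (hg_cont.intervalIntegrable 0 R), h1]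
    ring
  -- substitution x = c t
  have hfx : ∀ x ∈ Set.uIcc (0:ℝ) R,
      x ^ 2 / (ε + κ * |x| ^ m) = (c ^ 2 / ε) * ((x / c) ^ 2 / (1 + (x / c) ^ m)) := by
    intro x hx
    rw [Set.uIcc_of_le hR.le] at hx
    have hx0 : 0 ≤ x := hx.1
    rw [abs_of_nonneg hx0]
    have hden : 0 < ε + κ * x ^ m := by
      have := mul_nonneg hκ.le (pow_nonneg hx0 m); linarith
    have h1 : (x / c) ^ m = κ * x ^ m / ε := by
      rw [div_pow, hcm]
      field_simp
    have hden2 : 0 < 1 + κ * x ^ m / ε := by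
      have := mul_nonneg hκ.le (pow_nonneg hx0 m)
      positivity
    rw [div_pow, h1]
    field_simp
  have hsub : (∫ x in (0:ℝ)..R, x ^ 2 / (ε + κ * |x| ^ m))
      = (c ^ 3 / ε) * ∫ t in (0:ℝ)..(R / c), t ^ 2 / (1 + t ^ m) := by
    rw [intervalIntegral.integral_congr hfx, intervalIntegral.integral_const_mul,
      intervalIntegral.integral_comp_div (fun t : ℝ => t ^ 2 / (1 + t ^ m)) hc.ne',
      zero_div, smul_eq_mul]
    ring
  -- coefficient identity
  have hcoef : κ ^ (-(3 / (m:ℝ))) * ε ^ (-(1 - 3 / (m:ℝ))) = c ^ 3 / ε := by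
    have h3 : c ^ 3 = (ε / κ) ^ ((3:ℝ) / m) := by
      rw [hc_def, ← Real.rpow_natCast ((ε / κ) ^ ((m:ℝ)⁻¹)) 3,
        ← Real.rpow_mul hεκ.le]
      norm_num
      rw [mul_comm, ← div_eq_mul_inv]
    rw [h3, Real.div_rpow hε.le hκ.le, Real.rpow_neg hκ.le,
      show -(1 - 3 / (m:ℝ)) = 3 / (m:ℝ) - 1 by ring, Real.rpow_sub hε, Real.rpow_one]
    ring
  -- splitting the improper integral
  set T : ℝ := R / c with hT_def
  have hT : 0 < T := div_pos hR hc
  have hint := stmt4_integrable m hm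
  have hsplit : (∫ t in Set.Ioi (0:ℝ), t ^ 2 / (1 + t ^ m))
      = (∫ t in (0:ℝ)..T, t ^ 2 / (1 + t ^ m))
        + ∫ t in Set.Ioi T, t ^ 2 / (1 + t ^ m) := by
    rw [intervalIntegral.integral_of_le hT.le,
      ← MeasureTheory.setIntegral_union (Set.Ioc_disjoint_Ioi le_rfl) measurableSet_Ioi
        (hint.mono_set Set.Ioc_subset_Ioi_self)
        (hint.mono_set (Set.Ioi_subset_Ioi hT.le)),
      Set.Ioc_union_Ioi_eq_Ioi hT.le]
  have htail_nonneg : 0 ≤ ∫ t in Set.Ioi T, t ^ 2 / (1 + t ^ m) :=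
    MeasureTheory.setIntegral_nonneg measurableSet_Ioi
      (fun t ht => stmt4_f_nonneg m (hT.trans ht))
  have htail := stmt4_tail m hm hT
  -- final computation
  have hfinal : (c ^ 3 / ε) * (T ^ ((3:ℝ) - m) / ((m:ℝ) - 3))
      = R ^ ((3:ℝ) - m) / (((m:ℝ) - 3) * κ) := by
    have hTpow : T ^ ((3:ℝ) - m) = R ^ ((3:ℝ) - m) / c ^ ((3:ℝ) - m) :=
      Real.div_rpow hR.le hc.le _
    have hcpow : c ^ ((3:ℝ) - m) = c ^ 3 * κ / ε := by
      rw [Real.rpow_sub hc, show (3:ℝ) = ((3:ℕ):ℝ) by norm_cast, Real.rpow_natCast,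
        Real.rpow_natCast, hcm]
      field_simp
    rw [hTpow, hcpow]
    have hc3 : (0:ℝ) < c ^ 3 := pow_pos hc 3
    field_simp
  rw [hsym, hsub, mul_assoc, hcoef, hsplit]
  have habs : 2 * (c ^ 3 / ε * ∫ t in (0:ℝ)..T, t ^ 2 / (1 + t ^ m))
      - 2 * ((∫ t in (0:ℝ)..T, t ^ 2 / (1 + t ^ m))
          + ∫ t in Set.Ioi T, t ^ 2 / (1 + t ^ m)) * (c ^ 3 / ε)
      = -(2 * (c ^ 3 / ε) * ∫ t in Set.Ioi T, t ^ 2 / (1 + t ^ m)) := by ring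
  rw [habs, abs_neg, abs_of_nonneg (by positivity)]
  calc 2 * (c ^ 3 / ε) * ∫ t in Set.Ioi T, t ^ 2 / (1 + t ^ m)
      ≤ 2 * (c ^ 3 / ε) * (T ^ ((3:ℝ) - m) / ((m:ℝ) - 3)) := by
        apply mul_le_mul_of_nonneg_left htail (by positivity)
    _ = 2 * R ^ ((3:ℝ) - m) / (((m:ℝ) - 3) * κ) := by
        rw [mul_assoc, hfinal]; ring
end

section
/- Let m ≥ 3 be an integer and Q_{3,m} := 2·∫₀^∞ t/(1 + t^m) dt. For every κ > 0 and R > 0 there exists a constant C > 0, depending only on κ, R, m, such that for all ε ∈ (0, 1/2): |∫_{B_R} 1/(ε + κ·|x′|^m) dx′ − π·Q_{3,m}·κ^{−2/m}·ε^{−(1−2/m)}| ≤ C, where B_R ⊂ ℝ² is the open disc of radius R centered at the origin and dx′ is two-dimensional Lebesgue measure. -/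
open MeasureTheory

namespace Stmt5Aux
open Set

lemma integrableOn_aux {m : ℕ} (hm : 3 ≤ m) :
    IntegrableOn (fun t : ℝ => t / (1 + t ^ m)) (Ioi 0) := by
  have hm3 : (3:ℝ) ≤ (m:ℝ) := by exact_mod_cast hm
  have h1 : IntegrableOn (fun t : ℝ => t / (1 + t ^ m)) (Ioc 0 1) := by
    apply (ContinuousOn.integrableOn_Icc ?_).mono_set Ioc_subset_Icc_self
    exact ContinuousOn.div continuousOn_id
      ((continuous_const.add (continuous_pow m)).continuousOn)
      (fun x hx => ne_of_gt (by nlinarith [pow_nonneg hx.1 m]))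
  have h2 : IntegrableOn (fun t : ℝ => t / (1 + t ^ m)) (Ioi 1) := by
    have hint := integrableOn_Ioi_rpow_of_lt (a := 1 - (m:ℝ)) (by linarith) (c := 1) one_pos
    refine hint.mono' ?_ ?_
    · apply ContinuousOn.aestronglyMeasurable ?_ measurableSet_Ioi
      exact ContinuousOn.div continuousOn_id
        ((continuous_const.add (continuous_pow m)).continuousOn)
        (fun x hx => ne_of_gt (by nlinarith [pow_nonneg (by linarith [mem_Ioi.1 hx] : (0:ℝ) ≤ x) m]))
    · filter_upwards [ae_restrict_mem measurableSet_Ioi] with t ht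
      have ht0 : (0:ℝ) < t := lt_trans one_pos ht
      have htm : (0:ℝ) < t ^ m := pow_pos ht0 m
      have he : t ^ ((1:ℝ) - m) = t / t ^ m := by
        rw [Real.rpow_sub ht0, Real.rpow_one, Real.rpow_natCast]
      rw [Real.norm_eq_abs, abs_of_nonneg (by positivity), he]
      gcongr
      linarith
  have := h1.union h2
  rwa [Ioc_union_Ioi_eq_Ioi zero_le_one] at this

lemma tail_aux {m : ℕ} (hm : 3 ≤ m) {T : ℝ} (hT : 0 < T) :
    ∫ t in Ioi T, t / (1 + t ^ m) ≤ T ^ ((2:ℝ) - m) / ((m:ℝ) - 2) := by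
  have hm3 : (3:ℝ) ≤ (m:ℝ) := by exact_mod_cast hm
  have hm1 : (1:ℝ) - m < -1 := by linarith
  have h1 : ∫ t in Ioi T, t / (1 + t ^ m) ≤ ∫ t in Ioi T, t ^ ((1:ℝ) - m) := by
    apply setIntegral_mono_on ((integrableOn_aux hm).mono_set (Ioi_subset_Ioi hT.le))
      (integrableOn_Ioi_rpow_of_lt hm1 hT) measurableSet_Ioi
    intro t ht
    have ht0 : 0 < t := hT.trans (mem_Ioi.1 ht)
    have htm : (0:ℝ) < t ^ m := pow_pos ht0 m
    have he : t ^ ((1:ℝ) - m) = t / t ^ m := by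
      rw [Real.rpow_sub ht0, Real.rpow_one, Real.rpow_natCast]
    rw [he]
    gcongr
    linarith
  rw [integral_Ioi_rpow_of_lt hm1 hT] at h1
  have e : (1:ℝ) - m + 1 = 2 - m := by ring
  rw [e] at h1
  have e2 : (2:ℝ) - m = -((m:ℝ) - 2) := by ring
  calc ∫ t in Ioi T, t / (1 + t ^ m) ≤ _ := h1
    _ = T ^ ((2:ℝ) - m) / ((m:ℝ) - 2) := by rw [e2, div_neg, neg_div, neg_neg]

lemma vol_ball2 : (volume (Metric.ball (0 : EuclideanSpace ℝ (Fin 2)) 1)).toReal = Real.pi := by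
  rw [EuclideanSpace.volume_ball]
  norm_num [Fintype.card_fin]
  exact Real.sq_sqrt Real.pi_nonneg

lemma radial (g : ℝ → ℝ) (R : ℝ) :
    ∫ x in Metric.ball (0 : EuclideanSpace ℝ (Fin 2)) R, g ‖x‖ =
      2 * Real.pi * ∫ y in Ioo (0:ℝ) R, y * g y := by
  have h0 : ∫ x in Metric.ball (0 : EuclideanSpace ℝ (Fin 2)) R, g ‖x‖ =
      ∫ x : EuclideanSpace ℝ (Fin 2), Set.indicator (Set.Iio R) g ‖x‖ := by
    rw [← integral_indicator measurableSet_ball]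
    congr 1
    ext x
    by_cases h : ‖x‖ < R <;> simp [Set.indicator_apply, mem_ball_zero_iff, h]
  rw [h0, integral_fun_norm_addHaar volume (Set.indicator (Set.Iio R) g)]
  rw [measureReal_def, vol_ball2, finrank_euclideanSpace_fin]
  have h1 : ∀ y : ℝ, y ^ (2 - 1) • Set.indicator (Set.Iio R) g y =
      Set.indicator (Set.Iio R) (fun y => y * g y) y := by
    intro y
    by_cases h : y ∈ Set.Iio R <;> simp [Set.indicator_apply, h]
  simp only [h1]
  rw [integral_indicator measurableSet_Iio, Measure.restrict_restrict measurableSet_Iio]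
  rw [show Set.Iio R ∩ Set.Ioi 0 = Set.Ioo 0 R from by ext y; simp [and_comm]]
  rw [nsmul_eq_mul, smul_eq_mul]
  ring

end Stmt5Aux

open Stmt5Aux in
/-- Let `m ≥ 3` and `Q_{3,m} := 2∫₀^∞ t/(1 + t^m) dt`. For every `κ > 0`, `R > 0` there is
`C > 0` (depending only on `κ, R, m`) such that for all `ε ∈ (0, 1/2)`:
`|∫_{B_R ⊂ ℝ²} 1/(ε + κ·|x′|^m) dx′ − π·Q_{3,m}·κ^{−2/m}·ε^{−(1−2/m)}| ≤ C`. -/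
theorem stmt5 (m : ℕ) (hm : 3 ≤ m) (κ R : ℝ) (hκ : 0 < κ) (hR : 0 < R) :
    ∃ C > 0, ∀ ε : ℝ, 0 < ε → ε < 1/2 →
      |(∫ x in Metric.ball (0 : EuclideanSpace ℝ (Fin 2)) R, 1 / (ε + κ * ‖x‖ ^ m)) -
          Real.pi * (2 * ∫ t in Set.Ioi (0 : ℝ), t / (1 + t ^ m)) *
            κ ^ (-(2 / (m : ℝ))) * ε ^ (-(1 - 2 / (m : ℝ)))| ≤ C := by
  have hm3 : (3:ℝ) ≤ (m:ℝ) := by exact_mod_cast hm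
  have hm0 : (m:ℝ) ≠ 0 := by linarith
  set Q : ℝ := ∫ t in Set.Ioi (0:ℝ), t / (1 + t ^ m) with hQ
  refine ⟨2 * Real.pi * R ^ ((2:ℝ) - m) / (κ * ((m:ℝ) - 2)),
    div_pos (by positivity) (mul_pos hκ (by linarith)), ?_⟩
  intro ε hε hε2
  set c : ℝ := (ε / κ) ^ ((1:ℝ)/m) with hc
  have hεκ : (0:ℝ) < ε / κ := div_pos hε hκ
  have hc0 : 0 < c := Real.rpow_pos_of_pos hεκ _
  have hcr : ∀ x : ℝ, c ^ x = (ε/κ) ^ (x / (m:ℝ)) := by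
    intro x
    rw [hc, ← Real.rpow_mul hεκ.le]
    congr 1
    ring
  have hcm : c ^ m = ε / κ := by
    rw [← Real.rpow_natCast c m, hcr, div_self hm0, Real.rpow_one]
  set T : ℝ := R / c with hT
  have hT0 : 0 < T := div_pos hR hc0
  -- Step A: radial reduction
  have hA : (∫ x in Metric.ball (0 : EuclideanSpace ℝ (Fin 2)) R, 1 / (ε + κ * ‖x‖ ^ m))
      = 2 * Real.pi * ∫ y in Set.Ioo (0:ℝ) R, y * (1 / (ε + κ * y ^ m)) :=
    radial (fun y => 1 / (ε + κ * y ^ m)) R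
  -- Step B: to interval integral and substitution
  have hB : ∫ y in Set.Ioo (0:ℝ) R, y * (1 / (ε + κ * y ^ m))
      = ∫ y in (0:ℝ)..R, y * (1 / (ε + κ * y ^ m)) := by
    rw [intervalIntegral.integral_of_le hR.le, integral_Ioc_eq_integral_Ioo]
  have hpt : ∀ t : ℝ, (c * t) * (1 / (ε + κ * (c * t) ^ m)) = (c / ε) * (t / (1 + t ^ m)) := by
    intro t
    rw [mul_pow, hcm, show ε + κ * (ε / κ * t ^ m) = ε * (1 + t ^ m) by
      field_simp, mul_one_div, div_mul_div_comm]
  have hsub : ∫ y in (0:ℝ)..R, y * (1 / (ε + κ * y ^ m))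
      = (c * (c / ε)) * ∫ t in (0:ℝ)..T, t / (1 + t ^ m) := by
    have h := intervalIntegral.integral_comp_mul_left (a := 0) (b := T)
      (fun y => y * (1 / (ε + κ * y ^ m))) (c := c) hc0.ne'
    simp only [hpt] at h
    rw [mul_zero, show c * T = R by rw [hT]; field_simp, smul_eq_mul,
      intervalIntegral.integral_const_mul] at h
    calc ∫ y in (0:ℝ)..R, y * (1 / (ε + κ * y ^ m))
        = c * ((c / ε) * ∫ t in (0:ℝ)..T, t / (1 + t ^ m)) := by
          rw [h, ← mul_assoc, mul_inv_cancel₀ hc0.ne', one_mul]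
      _ = (c * (c / ε)) * ∫ t in (0:ℝ)..T, t / (1 + t ^ m) := by ring
  -- Step C: split Q
  set tail : ℝ := ∫ t in Set.Ioi T, t / (1 + t ^ m) with htail
  have hsplit : ∫ t in (0:ℝ)..T, t / (1 + t ^ m) = Q - tail := by
    have h1 : IntegrableOn (fun t : ℝ => t / (1 + t ^ m)) (Set.Ioc 0 T) :=
      (integrableOn_aux hm).mono_set Set.Ioc_subset_Ioi_self
    have h2 : IntegrableOn (fun t : ℝ => t / (1 + t ^ m)) (Set.Ioi T) :=
      (integrableOn_aux hm).mono_set (Set.Ioi_subset_Ioi hT0.le)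
    have hu : Q = (∫ t in Set.Ioc (0:ℝ) T, t / (1 + t ^ m)) + tail := by
      rw [hQ, ← Set.Ioc_union_Ioi_eq_Ioi hT0.le,
        setIntegral_union (Set.Ioc_disjoint_Ioi le_rfl) measurableSet_Ioi h1 h2]
    rw [intervalIntegral.integral_of_le hT0.le]
    linarith [hu]
  -- Power identities
  set P : ℝ := κ ^ (-(2 / (m:ℝ))) * ε ^ (-(1 - 2 / (m:ℝ))) with hPdef
  have hP : c * (c / ε) = P := by
    have h2 : c * (c / ε) = c ^ ((2:ℝ)) / ε := by
      rw [show (2:ℝ) = ((2:ℕ):ℝ) by norm_num, Real.rpow_natCast]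
      ring
    rw [h2, hcr 2, Real.div_rpow hε.le hκ.le, hPdef,
      Real.rpow_neg hκ.le, show -(1 - 2/(m:ℝ)) = 2/(m:ℝ) - 1 by ring,
      Real.rpow_sub hε, Real.rpow_one]
    ring
  have hPpos : 0 < P := by
    rw [hPdef]
    exact mul_pos (Real.rpow_pos_of_pos hκ _) (Real.rpow_pos_of_pos hε _)
  have hE : ε ^ (-(1 - 2 / (m:ℝ))) = ε ^ (((2:ℝ) - m)/(m:ℝ)) := by
    rw [show -(1 - 2 / (m:ℝ)) = ((2:ℝ) - m)/(m:ℝ) by field_simp; ring]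
  have hKK : κ ^ (-(2/(m:ℝ))) * κ ^ (((2:ℝ) - m)/(m:ℝ)) = κ⁻¹ := by
    rw [← Real.rpow_add hκ, show -(2/(m:ℝ)) + ((2:ℝ) - m)/(m:ℝ) = -1 by field_simp; ring,
      Real.rpow_neg_one]
  have key : ∀ Rp K1 KA EA M2 : ℝ, EA ≠ 0 → M2 ≠ 0 → K1 * KA = κ⁻¹ →
      K1 * EA * (Rp / (EA / KA) / M2) = Rp / (κ * M2) := by
    intro Rp K1 KA EA M2 hEA hM2 hKK'
    have h1 : K1 * KA * κ = 1 := by rw [hKK']; exact inv_mul_cancel₀ hκ.ne'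
    by_cases hKA : KA = 0
    · rw [hKA] at h1; simp at h1
    · field_simp
      linear_combination Rp * h1
  have hmain : P * (T ^ ((2:ℝ) - m) / ((m:ℝ) - 2)) = R ^ ((2:ℝ) - m) / (κ * ((m:ℝ) - 2)) := by
    rw [hPdef, hT, Real.div_rpow hR.le hc0.le, hcr, Real.div_rpow hε.le hκ.le, hE]
    exact key _ _ _ _ _ (Real.rpow_pos_of_pos hε _).ne' (by linarith) hKK
  have htail0 : 0 ≤ tail := by
    apply setIntegral_nonneg measurableSet_Ioi
    intro t ht
    have ht0 : (0:ℝ) < t := hT0.trans ht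
    have : (0:ℝ) < 1 + t ^ m := by nlinarith [pow_nonneg ht0.le m]
    positivity
  rw [hA, hB, hsub, hsplit]
  have e3 : 2 * Real.pi * (c * (c / ε) * (Q - tail)) -
      Real.pi * (2 * Q) * κ ^ (-(2 / (m:ℝ))) * ε ^ (-(1 - 2 / (m:ℝ))) =
      -(2 * Real.pi * (P * tail)) := by
    rw [hP, hPdef]
    ring
  rw [e3, abs_neg, abs_of_nonneg (mul_nonneg (by positivity) (mul_nonneg hPpos.le htail0))]
  calc 2 * Real.pi * (P * tail)
      ≤ 2 * Real.pi * (P * (T ^ ((2:ℝ) - m) / ((m:ℝ) - 2))) :=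
        mul_le_mul_of_nonneg_left
          (mul_le_mul_of_nonneg_left (tail_aux hm hT0) hPpos.le) (by positivity)
    _ = 2 * Real.pi * R ^ ((2:ℝ) - m) / (κ * ((m:ℝ) - 2)) := by rw [hmain, ← mul_div_assoc]
end

section
/- Let m ≥ 5 be an integer and Q̃_{3,m} := 2·∫₀^∞ t³/(1 + t^m) dt. For every κ > 0 and R > 0 there exists a constant C > 0, depending only on κ, R, m, such that for all ε ∈ (0, 1/2): |∫_{B_R} |x′|²/(ε + κ·|x′|^m) dx′ − π·Q̃_{3,m}·κ^{−4/m}·ε^{−(1−4/m)}| ≤ C, where B_R ⊂ ℝ² is the open disc of radius R centered at the origin and dx′ is two-dimensional Lebesgue measure. -/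
open MeasureTheory

namespace Stmt7Aux

open Set

lemma h_meas (m : ℕ) : Measurable (fun t : ℝ => t ^ 3 / (1 + t ^ m)) :=
  ((measurable_id.pow_const 3)).div (measurable_const.add (measurable_id.pow_const m))

lemma rpow_3m {m : ℕ} {t : ℝ} (ht0 : 0 < t) : t ^ ((3:ℝ) - m) = t ^ 3 / t ^ m := by
  rw [show (3:ℝ) = ((3:ℕ):ℝ) by norm_num, Real.rpow_sub ht0, Real.rpow_natCast,
    Real.rpow_natCast]

lemma h_int_Ioi {m : ℕ} (hm : 5 ≤ m) {T : ℝ} (hT : 0 < T) :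
    IntegrableOn (fun t : ℝ => t ^ 3 / (1 + t ^ m)) (Ioi T) := by
  have hm' : (3 : ℝ) - m < -1 := by
    have : (5 : ℝ) ≤ m := by exact_mod_cast hm
    linarith
  have hcont : ContinuousOn (fun t : ℝ => t ^ 3 / (1 + t ^ m)) (Icc T (max T 1)) := by
    apply ContinuousOn.div (by fun_prop) (by fun_prop)
    intro t ht
    have : 0 ≤ t := le_trans hT.le ht.1
    positivity
  have h1 : IntegrableOn (fun t : ℝ => t ^ 3 / (1 + t ^ m)) (Ioc T (max T 1)) :=
    (hcont.integrableOn_Icc).mono_set Ioc_subset_Icc_self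
  have h2 : IntegrableOn (fun t : ℝ => t ^ 3 / (1 + t ^ m)) (Ioi (max T 1)) := by
    have hg : IntegrableOn (fun t : ℝ => t ^ ((3:ℝ) - m)) (Ioi (max T 1)) :=
      integrableOn_Ioi_rpow_of_lt hm' (lt_max_of_lt_right one_pos)
    refine hg.mono' (h_meas m).aestronglyMeasurable ?_
    filter_upwards [ae_restrict_mem measurableSet_Ioi] with t ht
    have ht1 : (1:ℝ) < t := lt_of_le_of_lt (le_max_right _ _) ht
    have ht0 : (0:ℝ) < t := lt_trans one_pos ht1
    have hden : (0:ℝ) < t ^ m := by positivity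
    rw [Real.norm_eq_abs, abs_of_nonneg (by positivity), rpow_3m ht0]
    apply div_le_div_of_nonneg_left (by positivity : (0:ℝ) ≤ t ^ 3) hden
    linarith
  have := h1.union h2
  rwa [Ioc_union_Ioi_eq_Ioi (le_max_left T 1)] at this

lemma h_int_Ioc {m : ℕ} {T : ℝ} :
    IntegrableOn (fun t : ℝ => t ^ 3 / (1 + t ^ m)) (Ioc 0 T) := by
  have hcont : ContinuousOn (fun t : ℝ => t ^ 3 / (1 + t ^ m)) (Icc 0 T) := by
    apply ContinuousOn.div (by fun_prop) (by fun_prop)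
    intro t ht
    have : 0 ≤ t := ht.1
    positivity
  exact (hcont.integrableOn_Icc).mono_set Ioc_subset_Icc_self

lemma tail_nonneg {m : ℕ} {T : ℝ} (hT : 0 < T) :
    0 ≤ ∫ t in Ioi T, t ^ 3 / (1 + t ^ m) := by
  apply setIntegral_nonneg measurableSet_Ioi
  intro t ht
  have ht0 : (0:ℝ) < t := lt_trans hT ht
  positivity

lemma tail_bound {m : ℕ} (hm : 5 ≤ m) {T : ℝ} (hT : 0 < T) :
    ∫ t in Ioi T, t ^ 3 / (1 + t ^ m) ≤ T ^ ((4:ℝ) - m) / ((m:ℝ) - 4) := by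
  have hm' : (3 : ℝ) - m < -1 := by
    have : (5 : ℝ) ≤ m := by exact_mod_cast hm
    linarith
  have key : ∫ t in Ioi T, t ^ 3 / (1 + t ^ m) ≤ ∫ t in Ioi T, t ^ ((3:ℝ) - m) := by
    apply setIntegral_mono_on (h_int_Ioi hm hT) (integrableOn_Ioi_rpow_of_lt hm' hT)
      measurableSet_Ioi
    intro t ht
    have ht0 : (0:ℝ) < t := lt_trans hT ht
    rw [rpow_3m ht0]
    apply div_le_div_of_nonneg_left (by positivity) (by positivity)
    nlinarith [pow_pos ht0 m]
  rw [integral_Ioi_rpow_of_lt hm' hT, show (3:ℝ) - m + 1 = (4:ℝ) - m by ring] at key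
  rwa [show ((m:ℝ) - 4) = -((4:ℝ) - m) by ring, div_neg, ← neg_div]

lemma radial (ε κ : ℝ) (m : ℕ) (R : ℝ) :
    ∫ x in Metric.ball (0 : EuclideanSpace ℝ (Fin 2)) R, ‖x‖ ^ 2 / (ε + κ * ‖x‖ ^ m)
      = 2 * Real.pi * ∫ r in Ioo (0:ℝ) R, r ^ 3 / (ε + κ * r ^ m) := by
  set f : ℝ → ℝ := fun r => r ^ 2 / (ε + κ * r ^ m) with hf
  set g : ℝ → ℝ := (Iio R).indicator f with hg
  have hvol : (volume (Metric.ball (0 : EuclideanSpace ℝ (Fin 2)) 1)).toReal = Real.pi := by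
    rw [EuclideanSpace.volume_ball]
    simp only [Fintype.card_fin]
    norm_num [Real.Gamma_two, Real.sq_sqrt Real.pi_nonneg, ENNReal.toReal_ofReal Real.pi_nonneg]
  have step1 : ∫ x in Metric.ball (0 : EuclideanSpace ℝ (Fin 2)) R, ‖x‖ ^ 2 / (ε + κ * ‖x‖ ^ m)
      = ∫ x : EuclideanSpace ℝ (Fin 2), g ‖x‖ := by
    rw [← integral_indicator measurableSet_ball]
    congr 1
    funext x
    by_cases hx : ‖x‖ < R
    · simp only [hg, Set.indicator_of_mem (mem_Iio.mpr hx)]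
      rw [Set.indicator_of_mem (mem_ball_zero_iff.mpr hx)]
    · simp only [hg, Set.indicator_of_notMem (fun h => hx (mem_Iio.mp h))]
      rw [Set.indicator_of_notMem (fun h => hx (mem_ball_zero_iff.mp h))]
  have step2 := MeasureTheory.integral_fun_norm_addHaar
    (volume : Measure (EuclideanSpace ℝ (Fin 2))) g
  rw [finrank_euclideanSpace_fin] at step2
  have step3 : ∫ y in Ioi (0:ℝ), y ^ (2 - 1) • g y = ∫ r in Ioo (0:ℝ) R, r ^ 3 / (ε + κ * r ^ m) := by
    have hpt : ∀ y : ℝ, y ^ (2-1) • g y = (Iio R).indicator (fun y => y * f y) y := by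
      intro y
      by_cases hy : y ∈ Iio R
      · simp only [hg, Set.indicator_of_mem hy, smul_eq_mul]; norm_num
      · simp only [hg, Set.indicator_of_notMem hy, smul_zero]
    simp only [hpt]
    rw [setIntegral_indicator measurableSet_Iio, Ioi_inter_Iio]
    refine setIntegral_congr_fun measurableSet_Ioo (fun y hy => ?_)
    simp only [hf]
    rw [← mul_div_assoc]
    congr 1
    ring
  rw [step1, step2, step3, measureReal_def, hvol]
  rw [smul_eq_mul, nsmul_eq_mul]
  ring

lemma c_pow {ε κ : ℝ} (hε : 0 < ε) (hκ : 0 < κ) {m : ℕ} (hm0 : (m:ℝ) ≠ 0) :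
    κ * ((ε/κ) ^ ((1:ℝ)/m)) ^ m = ε := by
  rw [← Real.rpow_natCast ((ε/κ) ^ ((1:ℝ)/m)) m, ← Real.rpow_mul (by positivity)]
  rw [one_div, inv_mul_cancel₀ hm0, Real.rpow_one]
  field_simp

lemma subst (ε κ R : ℝ) (hε : 0 < ε) (hκ : 0 < κ) (hR : 0 < R) (m : ℕ) (hm : 5 ≤ m) :
    ∫ r in Ioo (0:ℝ) R, r ^ 3 / (ε + κ * r ^ m)
      = (((ε/κ) ^ ((1:ℝ)/m)) ^ 4 / ε) *
        ∫ t in Ioc (0:ℝ) (((ε/κ) ^ ((1:ℝ)/m))⁻¹ * R), t ^ 3 / (1 + t ^ m) := by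
  have hm0 : (m:ℝ) ≠ 0 := by positivity
  set c : ℝ := (ε/κ) ^ ((1:ℝ)/m) with hcdef
  have hc : 0 < c := Real.rpow_pos_of_pos (by positivity) _
  have hcm : κ * c ^ m = ε := c_pow hε hκ hm0
  have hpt : ∀ r ∈ Ioo (0:ℝ) R, r ^ 3 / (ε + κ * r ^ m)
      = (c ^ 3 / ε) * ((c⁻¹ * r) ^ 3 / (1 + (c⁻¹ * r) ^ m)) := by
    intro r hr
    have hr0 : 0 < r := hr.1
    have h2 : (0:ℝ) < 1 + (c⁻¹ * r) ^ m := by positivity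
    have key : ε * (c⁻¹ * r) ^ m = κ * r ^ m := by
      rw [mul_pow, inv_pow, ← hcm]
      field_simp
    have h1 : ε + κ * r ^ m = ε * (1 + (c⁻¹ * r) ^ m) := by rw [mul_add, mul_one, key]
    have h3 : (c⁻¹ * r) ^ 3 = r ^ 3 / c ^ 3 := by rw [mul_pow, inv_pow]; ring
    rw [h1, h3]
    field_simp
  rw [setIntegral_congr_fun measurableSet_Ioo hpt, integral_const_mul]
  have : ∫ r in Ioo (0:ℝ) R, (c⁻¹ * r) ^ 3 / (1 + (c⁻¹ * r) ^ m)
      = c * ∫ t in Ioc (0:ℝ) (c⁻¹ * R), t ^ 3 / (1 + t ^ m) := by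
    rw [← integral_Ioc_eq_integral_Ioo, ← intervalIntegral.integral_of_le hR.le,
      intervalIntegral.integral_comp_mul_left (fun t => t ^ 3 / (1 + t ^ m))
        (inv_ne_zero hc.ne'), inv_inv, mul_zero, smul_eq_mul,
      intervalIntegral.integral_of_le (by positivity)]
  rw [this]
  ring

end Stmt7Aux

open Stmt7Aux Set in
/-- Let `m ≥ 5` and `Q̃_{3,m} := 2∫₀^∞ t³/(1 + t^m) dt`. For every `κ > 0`, `R > 0` there is
`C > 0` (depending only on `κ, R, m`) such that for all `ε ∈ (0, 1/2)`:
`|∫_{B_R ⊂ ℝ²} |x′|²/(ε + κ·|x′|^m) dx′ − π·Q̃_{3,m}·κ^{−4/m}·ε^{−(1−4/m)}| ≤ C`. -/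
theorem stmt7 (m : ℕ) (hm : 5 ≤ m) (κ R : ℝ) (hκ : 0 < κ) (hR : 0 < R) :
    ∃ C > 0, ∀ ε : ℝ, 0 < ε → ε < 1/2 →
      |(∫ x in Metric.ball (0 : EuclideanSpace ℝ (Fin 2)) R, ‖x‖ ^ 2 / (ε + κ * ‖x‖ ^ m)) -
          Real.pi * (2 * ∫ t in Set.Ioi (0 : ℝ), t ^ 3 / (1 + t ^ m)) *
            κ ^ (-(4 / (m : ℝ))) * ε ^ (-(1 - 4 / (m : ℝ)))| ≤ C := by
  have hm5 : (5:ℝ) ≤ m := by exact_mod_cast hm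
  have hm4 : (0:ℝ) < (m:ℝ) - 4 := by linarith
  have hm0 : (m:ℝ) ≠ 0 := by positivity
  refine ⟨2 * Real.pi * R ^ ((4:ℝ) - m) / (κ * ((m:ℝ) - 4)), by
    have := Real.pi_pos
    have := Real.rpow_pos_of_pos hR ((4:ℝ) - m)
    positivity, ?_⟩
  intro ε hε hε2
  rw [radial, subst ε κ R hε hκ hR m hm]
  set c : ℝ := (ε/κ) ^ ((1:ℝ)/m) with hcdef
  have hc : 0 < c := Real.rpow_pos_of_pos (by positivity) _
  have hcm : κ * c ^ m = ε := c_pow hε hκ hm0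
  set T : ℝ := c⁻¹ * R with hTdef
  have hT0 : 0 < T := by positivity
  set I : ℝ := ∫ t in Ioi (0:ℝ), t ^ 3 / (1 + t ^ m) with hI
  set J : ℝ := ∫ t in Ioc (0:ℝ) T, t ^ 3 / (1 + t ^ m) with hJ
  set K : ℝ := ∫ t in Ioi T, t ^ 3 / (1 + t ^ m) with hK
  have hK0 : 0 ≤ K := tail_nonneg hT0
  have hsplit : I = J + K := by
    rw [hI, hJ, hK, ← setIntegral_union (Ioc_disjoint_Ioi le_rfl) measurableSet_Ioi
      h_int_Ioc (h_int_Ioi hm hT0), Ioc_union_Ioi_eq_Ioi hT0.le]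
  have hA : κ ^ (-(4 / (m : ℝ))) * ε ^ (-(1 - 4 / (m : ℝ))) = c ^ 4 / ε := by
    have hc4 : c ^ 4 = ε ^ ((4:ℝ)/m) * κ ^ (-((4:ℝ)/m)) := by
      rw [hcdef, ← Real.rpow_natCast _ 4, ← Real.rpow_mul (by positivity),
        show (1/(m:ℝ)) * ((4:ℕ):ℝ) = (4:ℝ)/m by push_cast; ring,
        Real.div_rpow hε.le hκ.le, Real.rpow_neg hκ.le, div_eq_mul_inv]
    rw [hc4, show -(1 - 4/(m:ℝ)) = (4:ℝ)/m - 1 by ring, Real.rpow_sub hε, Real.rpow_one]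
    ring
  have hmain : Real.pi * (2 * I) * κ ^ (-(4 / (m : ℝ))) * ε ^ (-(1 - 4 / (m : ℝ)))
      = 2 * Real.pi * (c ^ 4 / ε * I) := by
    rw [mul_assoc, hA]; ring
  rw [hmain, hsplit]
  rw [show 2 * Real.pi * (c ^ 4 / ε * J) - 2 * Real.pi * (c ^ 4 / ε * (J + K))
      = -(2 * Real.pi * (c ^ 4 / ε) * K) by ring, abs_neg,
    abs_of_nonneg (by
      have := Real.pi_pos
      apply mul_nonneg (by positivity) hK0)]
  have hbound : 2 * Real.pi * (c ^ 4 / ε) * K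
      ≤ 2 * Real.pi * (c ^ 4 / ε) * (T ^ ((4:ℝ) - m) / ((m:ℝ) - 4)) := by
    apply mul_le_mul_of_nonneg_left (tail_bound hm hT0)
    have := Real.pi_pos
    positivity
  refine hbound.trans (le_of_eq ?_)
  have hkey : (c ^ 4 / ε) * T ^ ((4:ℝ) - m) = R ^ ((4:ℝ) - m) / κ := by
    have h1 : T ^ ((4:ℝ) - m) = c ^ ((m:ℝ) - 4) * R ^ ((4:ℝ) - m) := by
      rw [hTdef, Real.mul_rpow (inv_nonneg.mpr hc.le) hR.le, Real.inv_rpow hc.le,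
        ← Real.rpow_neg hc.le, show -((4:ℝ) - m) = (m:ℝ) - 4 by ring]
    have h2 : c ^ 4 * c ^ ((m:ℝ) - 4) = ε / κ := by
      rw [← Real.rpow_natCast c 4, ← Real.rpow_add hc,
        show ((4:ℕ):ℝ) + ((m:ℝ) - 4) = ((m:ℕ):ℝ) by push_cast; ring, Real.rpow_natCast]
      rw [eq_div_iff hκ.ne']
      linarith [hcm]
    calc (c ^ 4 / ε) * T ^ ((4:ℝ) - m)
        = (c ^ 4 * c ^ ((m:ℝ) - 4)) * R ^ ((4:ℝ) - m) / ε := by rw [h1]; ring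
      _ = R ^ ((4:ℝ) - m) / κ := by rw [h2]; field_simp
  calc 2 * Real.pi * (c ^ 4 / ε) * (T ^ ((4:ℝ) - m) / ((m:ℝ) - 4))
      = 2 * Real.pi * ((c ^ 4 / ε) * T ^ ((4:ℝ) - m)) / ((m:ℝ) - 4) := by ring
    _ = 2 * Real.pi * R ^ ((4:ℝ) - m) / (κ * ((m:ℝ) - 4)) := by
        rw [hkey]; field_simp
end

section
/- Let λ, μ ∈ ℝ with λ + 2μ ≠ 0, let ε > 0, and let h₁, h₂ : ℝ² → ℝ be differentiable on an open set U ⊆ ℝ² with δ(x′) := ε + h₁(x′) − h₂(x′) > 0 for all x′ ∈ U. Define ū(x′, x₃) := (x₃ + ε/2 − h₂(x′))/δ(x′), f(t) := (1/2)(t − 1/2)² − 1/8, and for α ∈ {1, 2} set ũ_α(x′, x₃) := ((λ+μ)/(λ+2μ))·f(ū(x′, x₃))·∂_{x_α}δ(x′). Then for every x′ ∈ U, every x₃ ∈ ℝ, and each α ∈ {1, 2}: (i) ∂_{x₃}ū = 1/δ(x′); (ii) ∂_{x₃}∂_{x_α}ū = −∂_{x_α}δ(x′)/δ(x′)²; (iii)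 ∂_{x₃}∂_{x₃}ũ_α = ((λ+μ)/(λ+2μ))·∂_{x_α}δ(x′)/δ(x′)²; and consequently (λ+μ)·∂_{x₃}∂_{x_α}ū + (λ+2μ)·∂_{x₃}∂_{x₃}ũ_α = 0. -/
/-- Three-dimensional cancellation identity. Let `λ + 2μ ≠ 0`, `ε > 0`, and let `h₁, h₂ : ℝ² → ℝ`
be differentiable on an open set `U` with `δ(x′) := ε + h₁(x′) − h₂(x′) > 0` on `U`.
With `ū(x′,x₃) := (x₃ + ε/2 − h₂(x′))/δ(x′)`, `f(t) := (1/2)(t − 1/2)² − 1/8`, and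
`ũ_α(x′,x₃) := ((λ+μ)/(λ+2μ))·f(ū(x′,x₃))·∂_{x_α}δ(x′)` for `α ∈ {1,2}`, one has for every
`x′ ∈ U`, `x₃ ∈ ℝ`, `α`: (i) `∂₃ū = 1/δ(x′)`; (ii) `∂₃∂_αū = −∂_αδ(x′)/δ(x′)²`;
(iii) `∂₃∂₃ũ_α = ((λ+μ)/(λ+2μ))·∂_αδ(x′)/δ(x′)²`; consequently
`(λ+μ)·∂₃∂_αū + (λ+2μ)·∂₃∂₃ũ_α = 0`. -/
theorem stmt10 (lam mu ε : ℝ) (hlm : lam + 2 * mu ≠ 0) (hε : 0 < ε)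
    (U : Set (EuclideanSpace ℝ (Fin 2))) (hU : IsOpen U)
    (h₁ h₂ : EuclideanSpace ℝ (Fin 2) → ℝ)
    (hdiff : ∀ x ∈ U, DifferentiableAt ℝ h₁ x ∧ DifferentiableAt ℝ h₂ x)
    (hδpos : ∀ x ∈ U, 0 < ε + h₁ x - h₂ x) :
    ∀ x' ∈ U, ∀ x₃ : ℝ, ∀ α : Fin 2,
      (let δ : EuclideanSpace ℝ (Fin 2) → ℝ := fun y => ε + h₁ y - h₂ y
       let δα : ℝ := fderiv ℝ δ x' (EuclideanSpace.single α 1)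
       let ub : EuclideanSpace ℝ (Fin 2) → ℝ → ℝ := fun y t => (t + ε / 2 - h₂ y) / δ y
       let f : ℝ → ℝ := fun t => (1 / 2) * (t - 1 / 2) ^ 2 - 1 / 8
       let ut : EuclideanSpace ℝ (Fin 2) → ℝ → ℝ :=
         fun y t => ((lam + mu) / (lam + 2 * mu)) * f (ub y t) *
           fderiv ℝ δ y (EuclideanSpace.single α 1)
       deriv (fun t => ub x' t) x₃ = 1 / δ x' ∧
       deriv (fun t => fderiv ℝ (fun y => ub y t) x' (EuclideanSpace.single α 1)) x₃ =
         -δα / (δ x') ^ 2 ∧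
       deriv (fun t => deriv (fun t' => ut x' t') t) x₃ =
         ((lam + mu) / (lam + 2 * mu)) * δα / (δ x') ^ 2 ∧
       (lam + mu) *
           deriv (fun t => fderiv ℝ (fun y => ub y t) x' (EuclideanSpace.single α 1)) x₃ +
         (lam + 2 * mu) * deriv (fun t => deriv (fun t' => ut x' t') t) x₃ = 0) := by
  intro x' hx' x₃ α
  obtain ⟨hd1, hd2⟩ := hdiff x' hx'
  have hδpos' : (0:ℝ) < ε + h₁ x' - h₂ x' := hδpos x' hx'
  have hδne : (ε + h₁ x' - h₂ x') ≠ 0 := ne_of_gt hδpos'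
  intro δ δα ub f ut
  have hδdiff : DifferentiableAt ℝ δ x' :=
    ((differentiableAt_const ε).add hd1).sub hd2
  set D : EuclideanSpace ℝ (Fin 2) →L[ℝ] ℝ := fderiv ℝ δ x' with hD
  set v : EuclideanSpace ℝ (Fin 2) := EuclideanSpace.single α 1 with hv
  have hδx : δ x' = ε + h₁ x' - h₂ x' := rfl
  -- Part (i)
  have part1 : deriv (fun t => ub x' t) x₃ = 1 / δ x' := by
    have h : HasDerivAt (fun t : ℝ => (t + ε / 2 - h₂ x') / δ x') (1 / δ x') x₃ := by
      have := (((hasDerivAt_id x₃).add_const (ε / 2)).sub_const (h₂ x')).div_const (δ x')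
      simpa [one_div] using this
    exact h.deriv
  -- fderiv of y ↦ ub y t
  have hδxne : δ x' ≠ 0 := hδne
  have hfd : ∀ t : ℝ, fderiv ℝ (fun y => ub y t) x' v
      = (t + ε / 2 - h₂ x') * (-(δ x' ^ 2)⁻¹ * D v) + (δ x')⁻¹ * (-(fderiv ℝ h₂ x' v)) := by
    intro t
    have hc : HasFDerivAt (fun y => t + ε / 2 - h₂ y) (0 - fderiv ℝ h₂ x') x' :=
      (hasFDerivAt_const (t + ε / 2) x').sub hd2.hasFDerivAt
    have hden : HasFDerivAt δ D x' := hδdiff.hasFDerivAt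
    have hinv : HasFDerivAt (fun y => (δ y)⁻¹)
        ((ContinuousLinearMap.smulRight (1 : ℝ →L[ℝ] ℝ) (-(δ x' ^ 2)⁻¹)).comp D) x' :=
      (hasFDerivAt_inv hδxne).comp x' hden
    have h := hc.mul hinv
    have heq : (fun y => ub y t) = fun y => (t + ε / 2 - h₂ y) * (δ y)⁻¹ := by
      funext y; simp [ub, div_eq_mul_inv]
    rw [heq, show (fun y => (t + ε / 2 - h₂ y) * (δ y)⁻¹) = ((fun y => t + ε / 2 - h₂ y) * fun y => (δ y)⁻¹) from rfl, h.fderiv]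
    simp only [ContinuousLinearMap.add_apply, ContinuousLinearMap.smul_apply,
      ContinuousLinearMap.coe_comp', Function.comp_apply,
      ContinuousLinearMap.smulRight_apply, ContinuousLinearMap.one_apply,
      ContinuousLinearMap.sub_apply, ContinuousLinearMap.zero_apply, smul_eq_mul]
    ring
  -- Part (ii)
  have part2 : deriv (fun t => fderiv ℝ (fun y => ub y t) x' v) x₃ = -δα / (δ x') ^ 2 := by
    have heq : (fun t => fderiv ℝ (fun y => ub y t) x' v)
        = fun t => (t + ε / 2 - h₂ x') * (-(δ x' ^ 2)⁻¹ * D v) + (δ x')⁻¹ * (-(fderiv ℝ h₂ x' v)) :=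
      funext hfd
    rw [heq]
    have h : HasDerivAt (fun t : ℝ =>
        (t + ε / 2 - h₂ x') * (-(δ x' ^ 2)⁻¹ * D v) + (δ x')⁻¹ * (-(fderiv ℝ h₂ x' v)))
        (1 * (-(δ x' ^ 2)⁻¹ * D v)) x₃ :=
      ((((hasDerivAt_id x₃).add_const (ε / 2)).sub_const (h₂ x')).mul_const _).add_const _
    rw [h.deriv]
    show 1 * (-(δ x' ^ 2)⁻¹ * D v) = -(D v) / (δ x') ^ 2
    field_simp
  -- inner derivative of ut
  have hinner : ∀ t : ℝ, HasDerivAt (fun t' => ut x' t')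
      (((lam + mu) / (lam + 2 * mu)) * ((1/2) * (2 * ((t + ε/2 - h₂ x') / δ x' - 1/2) * (1 / δ x'))) * D v) t := by
    intro t
    have hub : HasDerivAt (fun t' : ℝ => (t' + ε / 2 - h₂ x') / δ x' - 1/2) (1 / δ x') t := by
      have := ((((hasDerivAt_id t).add_const (ε / 2)).sub_const (h₂ x')).div_const (δ x')).sub_const (1/2 : ℝ)
      simpa [one_div] using this
    have h2 : HasDerivAt (fun t' : ℝ => ((t' + ε / 2 - h₂ x') / δ x' - 1/2) ^ 2)
        (2 * ((t + ε/2 - h₂ x') / δ x' - 1/2) * (1 / δ x')) t := by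
      have := hub.fun_pow 2
      simpa [mul_comm] using this
    have h3 := (((h2.const_mul (1/2 : ℝ)).sub_const (1/8 : ℝ)).const_mul
      ((lam + mu) / (lam + 2 * mu))).mul_const (D v)
    exact h3
  have hinner' : (fun t => deriv (fun t' => ut x' t') t)
      = fun t => ((lam + mu) / (lam + 2 * mu)) * ((1/2) * (2 * ((t + ε/2 - h₂ x') / δ x' - 1/2) * (1 / δ x'))) * D v :=
    funext fun t => (hinner t).deriv
  -- Part (iii)
  have part3 : deriv (fun t => deriv (fun t' => ut x' t') t) x₃
      = ((lam + mu) / (lam + 2 * mu)) * δα / (δ x') ^ 2 := by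
    rw [hinner']
    have hub : HasDerivAt (fun t : ℝ => (t + ε/2 - h₂ x') / δ x' - 1/2) (1 / δ x') x₃ := by
      have := ((((hasDerivAt_id x₃).add_const (ε / 2)).sub_const (h₂ x')).div_const (δ x')).sub_const (1/2 : ℝ)
      simpa [one_div] using this
    have h : HasDerivAt (fun t : ℝ =>
        ((lam + mu) / (lam + 2 * mu)) * ((1/2) * (2 * ((t + ε/2 - h₂ x') / δ x' - 1/2) * (1 / δ x'))) * D v)
        (((lam + mu) / (lam + 2 * mu)) * ((1/2) * (2 * (1 / δ x') * (1 / δ x'))) * D v) x₃ := by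
      have h0 := ((((hub.const_mul (2:ℝ)).mul_const (1 / δ x')).const_mul (1/2 : ℝ)).const_mul
        ((lam + mu) / (lam + 2 * mu))).mul_const (D v)
      convert h0 using 2 <;> ring
    rw [h.deriv]
    show ((lam + mu) / (lam + 2 * mu)) * ((1/2) * (2 * (1 / δ x') * (1 / δ x'))) * D v
      = ((lam + mu) / (lam + 2 * mu)) * D v / (δ x') ^ 2
    field_simp [hδxne]
    all_goals first | exact Or.inl (Or.inl (pow_two _)) | ring
  refine ⟨part1, part2, part3, ?_⟩
  rw [part2, part3]
  show (lam + mu) * (-(D v) / (δ x') ^ 2) + (lam + 2 * mu) * (((lam + mu) / (lam + 2 * mu)) * D v / (δ x') ^ 2) = 0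
  have key : (lam + 2 * mu) * ((lam + mu) / (lam + 2 * mu)) = lam + mu := mul_div_cancel₀ _ hlm
  rw [show (lam + 2 * mu) * (((lam + mu) / (lam + 2 * mu)) * D v / (δ x') ^ 2)
      = (lam + 2 * mu) * ((lam + mu) / (lam + 2 * mu)) * D v / (δ x') ^ 2 by ring, key]
  ring
end

section
/- Let n, k ≥ 1 be integers, let B ⊆ ℝⁿ be a measurable set, let h, H : ℝⁿ → ℝ be continuous with h(x′) ≤ H(x′) ≤ h(x′) + δ₀ for all x′ ∈ B, where δ₀ > 0, and set Ω := {(x′, t) ∈ ℝⁿ × ℝ : x′ ∈ B, h(x′) < t < H(x′)}. Let w : ℝⁿ × ℝ → ℝ^k be continuous, such that for each x′ ∈ B the function t ↦ w(x′, t) is continuously differentiable on [h(x′), H(x′)] and w(x′, h(x′)) = 0, and assume ∂_t w is square integrable on Ω. Then ∫_Ω |w|² ≤ δ₀² · ∫_Ω |∂_t w|², where the integrals are with respect to Lebesgue measure on ℝ^{n+1}. -/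
open MeasureTheory

/-- Fubini for the region between two graphs, `lintegral` version. -/
lemma fubini_region {α : Type*} [MeasureSpace α] [SigmaFinite (volume : Measure α)]
    (B : Set α) (hB : MeasurableSet B) (h H : α → ℝ) (hh : Measurable h) (hH : Measurable H)
    (f : α × ℝ → ENNReal) (hf : Measurable f) :
    ∫⁻ p in {p : α × ℝ | p.1 ∈ B ∧ h p.1 < p.2 ∧ p.2 < H p.1}, f p
      = ∫⁻ x in B, ∫⁻ t in Set.Ioo (h x) (H x), f (x, t) := by
  classical
  set Ω : Set (α × ℝ) := {p | p.1 ∈ B ∧ h p.1 < p.2 ∧ p.2 < H p.1} with hΩdef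
  have hΩm : MeasurableSet Ω := by
    have : Ω = regionBetween h H B := by
      ext p; simp [hΩdef, regionBetween, Set.mem_Ioo, and_assoc]
    rw [this]; exact measurableSet_regionBetween hh hH hB
  have hind : Measurable (Ω.indicator f) := hf.indicator hΩm
  rw [← lintegral_indicator hΩm, MeasureTheory.Measure.volume_eq_prod α ℝ,
    lintegral_prod _ hind.aemeasurable]
  have key : ∀ x, (∫⁻ t, Ω.indicator f (x, t))
      = B.indicator (fun x => ∫⁻ t in Set.Ioo (h x) (H x), f (x, t)) x := by
    intro x
    by_cases hx : x ∈ B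
    · rw [Set.indicator_of_mem hx, ← lintegral_indicator measurableSet_Ioo]
      congr 1; funext t
      rw [Set.indicator_apply, Set.indicator_apply]
      refine if_congr ?_ rfl rfl
      simp only [hΩdef, Set.mem_setOf_eq, Set.mem_Ioo, hx, true_and]
    · rw [Set.indicator_of_notMem hx]
      have hzero : ∀ t : ℝ, Ω.indicator f (x, t) = 0 := by
        intro t
        apply Set.indicator_of_notMem
        intro hmem
        exact hx hmem.1
      simp [hzero]
  simp_rw [key]
  rw [lintegral_indicator hB]

/-- Thin-domain Poincaré inequality: for the narrow region
`Ω := {(x′,t) : x′ ∈ B, h(x′) < t < H(x′)}` with `h ≤ H ≤ h + δ₀` on `B`, and a continuous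
vector field `w` vanishing on the lower graph, `C¹` in `t`, with `∂_t w` square integrable
on `Ω`, one has `∫_Ω |w|² ≤ δ₀² ∫_Ω |∂_t w|²`. -/
theorem stmt11 (n k : ℕ) (hn : 1 ≤ n) (hk : 1 ≤ k)
    (B : Set (EuclideanSpace ℝ (Fin n))) (hB : MeasurableSet B)
    (h H : EuclideanSpace ℝ (Fin n) → ℝ) (hh : Continuous h) (hH : Continuous H)
    (δ₀ : ℝ) (hδ₀ : 0 < δ₀)
    (hhH : ∀ x ∈ B, h x ≤ H x ∧ H x ≤ h x + δ₀)
    (w : EuclideanSpace ℝ (Fin n) × ℝ → EuclideanSpace ℝ (Fin k))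
    (hw : Continuous w)
    (hwC1 : ∀ x ∈ B, ContDiffOn ℝ 1 (fun t => w (x, t)) (Set.Icc (h x) (H x)))
    (hw0 : ∀ x ∈ B, w (x, h x) = 0)
    (Ω : Set (EuclideanSpace ℝ (Fin n) × ℝ))
    (hΩ : Ω = {p | p.1 ∈ B ∧ h p.1 < p.2 ∧ p.2 < H p.1})
    (hint : IntegrableOn (fun p => ‖deriv (fun t => w (p.1, t)) p.2‖ ^ 2) Ω) :
    ∫ p in Ω, ‖w p‖ ^ 2 ≤ δ₀ ^ 2 * ∫ p in Ω, ‖deriv (fun t => w (p.1, t)) p.2‖ ^ 2 := by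
  classical
  set F : EuclideanSpace ℝ (Fin n) × ℝ → ℝ :=
    fun p => ‖deriv (fun t => w (p.1, t)) p.2‖ ^ 2 with hFdef
  set G : EuclideanSpace ℝ (Fin n) × ℝ → ℝ := fun p => ‖w p‖ ^ 2 with hGdef
  have hwu : Continuous (Function.uncurry (fun x (t : ℝ) => w (x, t))) := by
    exact hw
  have hFmeas : Measurable F := by
    have hd : Measurable (fun p : EuclideanSpace ℝ (Fin n) × ℝ =>
        deriv (fun t => w (p.1, t)) p.2) :=
      measurable_deriv_with_param (f := fun x (t : ℝ) => w (x, t)) hwu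
    exact hd.norm.pow_const 2
  have hGmeas : Measurable G := ((hw.norm.pow 2).measurable)
  have hΩm : MeasurableSet Ω := by
    have : Ω = regionBetween h H B := by
      ext p; simp [hΩ, regionBetween, Set.mem_Ioo, and_assoc]
    rw [this]; exact measurableSet_regionBetween hh.measurable hH.measurable hB
  -- the fiberwise energy
  set L : EuclideanSpace ℝ (Fin n) → ENNReal :=
    fun x => ∫⁻ t in Set.Ioo (h x) (H x), ENNReal.ofReal (F (x, t)) with hLdef
  -- pointwise bound
  have key : ∀ p ∈ Ω, ENNReal.ofReal (G p) ≤ ENNReal.ofReal δ₀ * L p.1 := by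
    rintro ⟨x, t⟩ hp
    rw [hΩ] at hp
    obtain ⟨hx, ht1, ht2⟩ := hp
    have hxlt : h x < H x := ht1.trans ht2
    set u : ℝ → EuclideanSpace ℝ (Fin k) := fun s => w (x, s) with hudef
    have hucont : Continuous u := hw.comp (continuous_const.prodMk continuous_id)
    set d : ℝ → EuclideanSpace ℝ (Fin k) :=
      derivWithin u (Set.Icc (h x) (H x)) with hddef
    have hdcont : ContinuousOn d (Set.Icc (h x) (H x)) :=
      (hwC1 x hx).continuousOn_derivWithin (uniqueDiffOn_Icc hxlt) le_rfl
    have hderiv : ∀ s ∈ Set.Ioo (h x) (H x), HasDerivAt u (d s) s := by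
      intro s hs
      have hnh : Set.Icc (h x) (H x) ∈ nhds s := Icc_mem_nhds hs.1 hs.2
      have hdiff : DifferentiableAt ℝ u s :=
        (((hwC1 x hx).differentiableOn one_ne_zero) s (Set.Ioo_subset_Icc_self hs)
          ).differentiableAt hnh
      have : d s = deriv u s := derivWithin_of_mem_nhds hnh
      rw [this]
      exact hdiff.hasDerivAt
    have hderivF : ∀ s ∈ Set.Ioo (h x) (H x), F (x, s) = ‖d s‖ ^ 2 := by
      intro s hs
      have hnh : Set.Icc (h x) (H x) ∈ nhds s := Icc_mem_nhds hs.1 hs.2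
      simp only [hFdef, hddef]
      rw [derivWithin_of_mem_nhds hnh]
    have hsub : Set.Icc (h x) t ⊆ Set.Icc (h x) (H x) :=
      Set.Icc_subset_Icc le_rfl ht2.le
    have hdint : IntervalIntegrable d volume (h x) t := by
      apply ContinuousOn.intervalIntegrable
      rw [Set.uIcc_of_le ht1.le]
      exact hdcont.mono hsub
    have hFTC : u t = ∫ s in (h x)..t, d s := by
      have := intervalIntegral.integral_eq_sub_of_hasDerivAt_of_le ht1.le
        (hucont.continuousOn) (fun s hs => hderiv s ⟨hs.1, hs.2.trans ht2⟩) hdint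
      rw [this, hudef]
      simp [hw0 x hx]
    have hnorm : ‖u t‖ ≤ ∫ s in Set.Ioc (h x) t, ‖d s‖ := by
      rw [hFTC, ← intervalIntegral.integral_of_le ht1.le]
      exact intervalIntegral.norm_integral_le_integral_norm ht1.le
    -- move to lintegral
    have hIocsub : Set.Ioc (h x) t ⊆ Set.Ioo (h x) (H x) := fun s hs =>
      ⟨hs.1, hs.2.trans_lt ht2⟩
    have hdnormint : IntegrableOn (fun s => ‖d s‖) (Set.Ioc (h x) t) := hdint.1.norm
    have hlin : ENNReal.ofReal (∫ s in Set.Ioc (h x) t, ‖d s‖)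
        = ∫⁻ s in Set.Ioc (h x) t, ENNReal.ofReal ‖d s‖ := by
      exact ofReal_integral_eq_lintegral_ofReal hdnormint
        (Filter.Eventually.of_forall fun s => norm_nonneg _)
    have hdmeas : AEMeasurable (fun s => ENNReal.ofReal ‖d s‖)
        (volume.restrict (Set.Ioc (h x) t)) := by
      exact ((hdcont.mono (hsub.trans' Set.Ioc_subset_Icc_self)).norm.aemeasurable
        measurableSet_Ioc).ennreal_ofReal
    have hCS : ∫⁻ s in Set.Ioc (h x) t, ENNReal.ofReal ‖d s‖
        ≤ (∫⁻ s in Set.Ioc (h x) t, ENNReal.ofReal ‖d s‖ ^ (2 : ℝ)) ^ (1 / (2 : ℝ))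
          * (volume (Set.Ioc (h x) t)) ^ (1 / (2 : ℝ)) := by
      have h22 : Real.HolderConjugate 2 2 := by
        constructor <;> norm_num
      have := ENNReal.lintegral_mul_le_Lp_mul_Lq (volume.restrict (Set.Ioc (h x) t)) h22
        hdmeas (aemeasurable_const (b := (1 : ENNReal)))
      simpa using this
    have hpow : (∫⁻ s in Set.Ioc (h x) t, ENNReal.ofReal ‖d s‖ ^ (2 : ℝ)) ≤ L x := by
      have heq : ∫⁻ s in Set.Ioc (h x) t, ENNReal.ofReal ‖d s‖ ^ (2 : ℝ)
          = ∫⁻ s in Set.Ioc (h x) t, ENNReal.ofReal (F (x, s)) := by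
        apply setLIntegral_congr_fun measurableSet_Ioc
        refine fun s hs => ?_
        dsimp only
        rw [ENNReal.ofReal_rpow_of_nonneg (norm_nonneg _) (by norm_num),
          hderivF s (hIocsub hs)]
        norm_num
      rw [heq, hLdef]
      exact lintegral_mono_set hIocsub
    have hvol : volume (Set.Ioc (h x) t) ≤ ENNReal.ofReal δ₀ := by
      rw [Real.volume_Ioc]
      apply ENNReal.ofReal_le_ofReal
      have := (hhH x hx).2
      linarith
    have hhalf : (0 : ℝ) ≤ 1 / 2 := by norm_num
    have hbound : ENNReal.ofReal ‖u t‖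
        ≤ (L x) ^ (1 / (2 : ℝ)) * (ENNReal.ofReal δ₀) ^ (1 / (2 : ℝ)) := by
      calc ENNReal.ofReal ‖u t‖ ≤ ENNReal.ofReal (∫ s in Set.Ioc (h x) t, ‖d s‖) :=
            ENNReal.ofReal_le_ofReal hnorm
        _ = ∫⁻ s in Set.Ioc (h x) t, ENNReal.ofReal ‖d s‖ := hlin
        _ ≤ (∫⁻ s in Set.Ioc (h x) t, ENNReal.ofReal ‖d s‖ ^ (2 : ℝ)) ^ (1 / (2 : ℝ))
          * (volume (Set.Ioc (h x) t)) ^ (1 / (2 : ℝ)) := hCS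
        _ ≤ (L x) ^ (1 / (2 : ℝ)) * (ENNReal.ofReal δ₀) ^ (1 / (2 : ℝ)) := by
            exact mul_le_mul' (ENNReal.rpow_le_rpow hpow hhalf)
              (ENNReal.rpow_le_rpow hvol hhalf)
    have hsq : ENNReal.ofReal (G (x, t))
        = ENNReal.ofReal ‖u t‖ * ENNReal.ofReal ‖u t‖ := by
      rw [hGdef]
      simp only [hudef]
      rw [← ENNReal.ofReal_mul (norm_nonneg _), ← pow_two]
    rw [hsq]
    calc ENNReal.ofReal ‖u t‖ * ENNReal.ofReal ‖u t‖
        ≤ ((L x) ^ (1 / (2 : ℝ)) * (ENNReal.ofReal δ₀) ^ (1 / (2 : ℝ)))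
          * ((L x) ^ (1 / (2 : ℝ)) * (ENNReal.ofReal δ₀) ^ (1 / (2 : ℝ))) :=
          mul_le_mul' hbound hbound
      _ = ((L x) ^ (1 / (2 : ℝ)) * (L x) ^ (1 / (2 : ℝ)))
          * ((ENNReal.ofReal δ₀) ^ (1 / (2 : ℝ)) * (ENNReal.ofReal δ₀) ^ (1 / (2 : ℝ))) := by
          ring
      _ = L x * ENNReal.ofReal δ₀ := by
          rw [← ENNReal.rpow_add_of_nonneg _ _ hhalf hhalf,
            ← ENNReal.rpow_add_of_nonneg _ _ hhalf hhalf]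
          norm_num
      _ = ENNReal.ofReal δ₀ * L x := mul_comm _ _
  -- measurability of L
  set S : Set (EuclideanSpace ℝ (Fin n) × ℝ) := {p | h p.1 < p.2 ∧ p.2 < H p.1} with hSdef
  have hSm : MeasurableSet S := by
    apply MeasurableSet.inter
    · exact measurableSet_lt (hh.measurable.comp measurable_fst) measurable_snd
    · exact measurableSet_lt measurable_snd (hH.measurable.comp measurable_fst)
  have hgm : Measurable (S.indicator (fun p => ENNReal.ofReal (F p))) :=
    (ENNReal.measurable_ofReal.comp hFmeas).indicator hSm
  have hLeq : ∀ x, L x = ∫⁻ t, (S.indicator (fun p => ENNReal.ofReal (F p))) (x, t) := by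
    intro x
    simp only [hLdef]
    rw [← lintegral_indicator measurableSet_Ioo]
    congr 1
  have hLmeas : Measurable L := by
    have : L = fun x => ∫⁻ t, (S.indicator (fun p => ENNReal.ofReal (F p))) (x, t) :=
      funext hLeq
    rw [this]
    exact Measurable.lintegral_prod_right hgm
  -- Fubini for F
  have fubF : ∫⁻ p in Ω, ENNReal.ofReal (F p) = ∫⁻ x in B, L x := by
    rw [hΩ]
    exact fubini_region B hB h H hh.measurable hH.measurable _
      (ENNReal.measurable_ofReal.comp hFmeas)
  -- Fubini for the majorant
  have hMmeas : Measurable (fun p : EuclideanSpace ℝ (Fin n) × ℝ =>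
      ENNReal.ofReal δ₀ * L p.1) := measurable_const.mul (hLmeas.comp measurable_fst)
  have fubM : ∫⁻ p in Ω, (ENNReal.ofReal δ₀ * L p.1)
      = ∫⁻ x in B, ∫⁻ _t in Set.Ioo (h x) (H x), (ENNReal.ofReal δ₀ * L x) := by
    rw [hΩ]
    exact fubini_region B hB h H hh.measurable hH.measurable _ hMmeas
  -- the main ENNReal chain
  have hchain : ∫⁻ p in Ω, ENNReal.ofReal (G p)
      ≤ ENNReal.ofReal δ₀ * ENNReal.ofReal δ₀ * ∫⁻ p in Ω, ENNReal.ofReal (F p) := by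
    calc ∫⁻ p in Ω, ENNReal.ofReal (G p)
        ≤ ∫⁻ p in Ω, (ENNReal.ofReal δ₀ * L p.1) := setLIntegral_mono' hΩm key
      _ = ∫⁻ x in B, ∫⁻ _t in Set.Ioo (h x) (H x), (ENNReal.ofReal δ₀ * L x) := fubM
      _ = ∫⁻ x in B, (ENNReal.ofReal δ₀ * L x) * volume (Set.Ioo (h x) (H x)) := by
          apply lintegral_congr
          intro x
          rw [setLIntegral_const]
      _ ≤ ∫⁻ x in B, (ENNReal.ofReal δ₀ * L x) * ENNReal.ofReal δ₀ := by
          apply setLIntegral_mono' hB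
          intro x hx
          apply mul_le_mul_right
          rw [Real.volume_Ioo]
          apply ENNReal.ofReal_le_ofReal
          have := (hhH x hx).2
          linarith
      _ = ∫⁻ x in B, ENNReal.ofReal δ₀ * ENNReal.ofReal δ₀ * L x := by
          apply lintegral_congr
          intro x
          ring
      _ = ENNReal.ofReal δ₀ * ENNReal.ofReal δ₀ * ∫⁻ x in B, L x := by
          rw [lintegral_const_mul _ hLmeas]
      _ = ENNReal.ofReal δ₀ * ENNReal.ofReal δ₀ * ∫⁻ p in Ω, ENNReal.ofReal (F p) := by
          rw [fubF]
  -- finiteness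
  have hFfin : ∫⁻ p in Ω, ENNReal.ofReal (F p) < ⊤ := hint.lintegral_lt_top
  -- back to real integrals
  have hGeq : ∫ p in Ω, G p = (∫⁻ p in Ω, ENNReal.ofReal (G p)).toReal :=
    integral_eq_lintegral_of_nonneg_ae
      (Filter.Eventually.of_forall fun p => by positivity)
      ((hGmeas.aestronglyMeasurable).restrict)
  have hFeq : ∫ p in Ω, F p = (∫⁻ p in Ω, ENNReal.ofReal (F p)).toReal :=
    integral_eq_lintegral_of_nonneg_ae
      (Filter.Eventually.of_forall fun p => by positivity)
      ((hFmeas.aestronglyMeasurable).restrict)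
  show ∫ p in Ω, G p ≤ δ₀ ^ 2 * ∫ p in Ω, F p
  rw [hGeq, hFeq]
  have hne : ENNReal.ofReal δ₀ * ENNReal.ofReal δ₀ * ∫⁻ p in Ω, ENNReal.ofReal (F p) ≠ ⊤ :=
    ENNReal.mul_ne_top (ENNReal.mul_ne_top ENNReal.ofReal_ne_top ENNReal.ofReal_ne_top)
      hFfin.ne
  have := ENNReal.toReal_mono hne hchain
  rw [ENNReal.toReal_mul, ENNReal.toReal_mul, ENNReal.toReal_ofReal hδ₀.le] at this
  calc (∫⁻ p in Ω, ENNReal.ofReal (G p)).toReal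
      ≤ δ₀ * δ₀ * (∫⁻ p in Ω, ENNReal.ofReal (F p)).toReal := this
    _ = δ₀ ^ 2 * (∫⁻ p in Ω, ENNReal.ofReal (F p)).toReal := by ring
end

section
/- Let n ≥ 1 be an integer, ε ∈ (0, 1), κ > 0, C₀ > 0, R > 0, and let h₁, h₂ : ℝⁿ → ℝ be differentiable on the open ball B_R ⊂ ℝⁿ with h₁(0) = h₂(0) = 0, |∇h_i(x′)| ≤ C₀|x′| for i = 1, 2, and h₁(x′) − h₂(x′) ≥ κ|x′|² for all x′ ∈ B_R. Set δ(x′) := ε + h₁(x′) − h₂(x′) and ū(x′, x_{n+1}) := (x_{n+1} + ε/2 − h₂(x′))/δ(x′). Then there exists a constant C > 0, depending only on κ and C₀, such that for all x′ ∈ B_R and all x_{n+1} ∈ [−ε/2 + h₂(x′), ε/2 + h₁(x′)]: |∇_{x′}ū(x′, x_{n+1})| ≤ C·|x′|/(ε + |x′|²), and ∂_{x_{n+1}}ū(x′, x_{n+1}) = 1/δ(x′). -/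
/-- Gradient estimate for the auxiliary function `ū = (x_{n+1} + ε/2 − h₂(x′))/δ(x′)`,
`δ(x′) = ε + h₁(x′) − h₂(x′)`, on the narrow region: there is `C > 0` depending only on `κ`
and `C₀` such that `|∇_{x′}ū| ≤ C|x′|/(ε + |x′|²)` and `∂_{x_{n+1}}ū = 1/δ(x′)`. -/
theorem stmt13 (κ C₀ : ℝ) (hκ : 0 < κ) (hC₀ : 0 < C₀) :
    ∃ C > 0, ∀ (n : ℕ), 1 ≤ n → ∀ (ε R : ℝ), 0 < ε → ε < 1 → 0 < R →
      ∀ (h₁ h₂ : EuclideanSpace ℝ (Fin n) → ℝ),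
        (∀ x ∈ Metric.ball (0 : EuclideanSpace ℝ (Fin n)) R,
          DifferentiableAt ℝ h₁ x ∧ DifferentiableAt ℝ h₂ x) →
        h₁ 0 = 0 → h₂ 0 = 0 →
        (∀ x ∈ Metric.ball (0 : EuclideanSpace ℝ (Fin n)) R,
          ‖fderiv ℝ h₁ x‖ ≤ C₀ * ‖x‖ ∧ ‖fderiv ℝ h₂ x‖ ≤ C₀ * ‖x‖) →
        (∀ x ∈ Metric.ball (0 : EuclideanSpace ℝ (Fin n)) R,
          κ * ‖x‖ ^ 2 ≤ h₁ x - h₂ x) →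
        ∀ x ∈ Metric.ball (0 : EuclideanSpace ℝ (Fin n)) R,
          ∀ t ∈ Set.Icc (-ε / 2 + h₂ x) (ε / 2 + h₁ x),
            ‖fderiv ℝ (fun y => (t + ε / 2 - h₂ y) / (ε + h₁ y - h₂ y)) x‖ ≤
                C * ‖x‖ / (ε + ‖x‖ ^ 2) ∧
              deriv (fun s => (s + ε / 2 - h₂ x) / (ε + h₁ x - h₂ x)) t =
                1 / (ε + h₁ x - h₂ x) := by
  refine ⟨3 * C₀ * (1 + 1 / κ), by positivity, ?_⟩
  intro n hn ε R hε hε1 hR h₁ h₂ hdiff h10 h20 hgrad hconv x hx t ht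
  obtain ⟨hd1, hd2⟩ := hdiff x hx
  obtain ⟨hg1, hg2⟩ := hgrad x hx
  have hκx := hconv x hx
  set g : ℝ := ε + h₁ x - h₂ x with hgdef
  have hglb : ε + κ * ‖x‖ ^ 2 ≤ g := by simp [hgdef]; linarith
  have hgpos : 0 < g := lt_of_lt_of_le (by positivity) hglb
  have hgne : g ≠ 0 := ne_of_gt hgpos
  constructor
  · -- fderiv part
    set f' : EuclideanSpace ℝ (Fin n) →L[ℝ] ℝ := -(fderiv ℝ h₂ x) with hf'
    set g' : EuclideanSpace ℝ (Fin n) →L[ℝ] ℝ := fderiv ℝ h₁ x - fderiv ℝ h₂ x with hg'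
    have hf : HasFDerivAt (fun y => t + ε / 2 - h₂ y) f' x :=
      hd2.hasFDerivAt.const_sub _
    have hg : HasFDerivAt (fun y => ε + h₁ y - h₂ y) g' x :=
      (hd1.hasFDerivAt.const_add ε).sub hd2.hasFDerivAt
    have hinv : HasFDerivAt (fun y => (ε + h₁ y - h₂ y)⁻¹) ((-(g ^ 2)⁻¹) • g') x := by
      have := (hasDerivAt_inv hgne).comp_hasFDerivAt x hg
      exact this
    have hmul : HasFDerivAt (fun y => (t + ε / 2 - h₂ y) / (ε + h₁ y - h₂ y))
        ((t + ε / 2 - h₂ x) • ((-(g ^ 2)⁻¹) • g') + g⁻¹ • f') x := by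
      have := hf.mul hinv
      have e : (fun y => (t + ε / 2 - h₂ y) / (ε + h₁ y - h₂ y)) =
          ((fun y => t + ε / 2 - h₂ y) * fun y => (ε + h₁ y - h₂ y)⁻¹) := by
        funext y; simp only [Pi.mul_apply, div_eq_mul_inv]
      rw [e]; exact this
    rw [hmul.fderiv]
    have hft : 0 ≤ t + ε / 2 - h₂ x := by
      have := ht.1; linarith
    have hft2 : t + ε / 2 - h₂ x ≤ g := by
      have := ht.2; simp [hgdef]; linarith
    have hng' : ‖g'‖ ≤ 2 * C₀ * ‖x‖ := by
      calc ‖g'‖ ≤ ‖fderiv ℝ h₁ x‖ + ‖fderiv ℝ h₂ x‖ := norm_sub_le _ _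
        _ ≤ 2 * C₀ * ‖x‖ := by linarith
    have hnf' : ‖f'‖ ≤ C₀ * ‖x‖ := by rw [hf', norm_neg]; exact hg2
    have b1 : ‖(t + ε / 2 - h₂ x) • ((-(g ^ 2)⁻¹) • g')‖ ≤ g * ((g ^ 2)⁻¹ * (2 * C₀ * ‖x‖)) := by
      rw [norm_smul (t + ε / 2 - h₂ x) ((-(g ^ 2)⁻¹) • g'), norm_smul (-(g ^ 2)⁻¹) g',
        Real.norm_eq_abs, Real.norm_eq_abs, abs_neg,
        abs_of_nonneg (show (0:ℝ) ≤ (g ^ 2)⁻¹ by positivity), abs_of_nonneg hft]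
      gcongr
    have b2 : ‖g⁻¹ • f'‖ ≤ g⁻¹ * (C₀ * ‖x‖) := by
      rw [norm_smul g⁻¹ f', Real.norm_eq_abs, abs_of_nonneg (le_of_lt (inv_pos.mpr hgpos))]
      gcongr
    have key : ‖(t + ε / 2 - h₂ x) • ((-(g ^ 2)⁻¹) • g') + g⁻¹ • f'‖
        ≤ 3 * C₀ * ‖x‖ / g := by
      refine (norm_add_le _ _).trans ?_
      have : g * ((g ^ 2)⁻¹ * (2 * C₀ * ‖x‖)) + g⁻¹ * (C₀ * ‖x‖) = 3 * C₀ * ‖x‖ / g := by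
        field_simp; ring
      linarith
    refine key.trans ?_
    rw [div_le_div_iff₀ hgpos (by positivity)]
    have h1 : 3 * C₀ * ‖x‖ * (ε + ‖x‖ ^ 2) ≤ 3 * C₀ * (1 + 1 / κ) * ‖x‖ * (ε + κ * ‖x‖ ^ 2) := by
      have expand : 3 * C₀ * (1 + 1 / κ) * ‖x‖ * (ε + κ * ‖x‖ ^ 2)
          = 3 * C₀ * ‖x‖ * (ε + ‖x‖ ^ 2) + 3 * C₀ * ‖x‖ * (ε / κ + κ * ‖x‖ ^ 2) := by
        field_simp; ring
      rw [expand]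
      have : 0 ≤ 3 * C₀ * ‖x‖ * (ε / κ + κ * ‖x‖ ^ 2) := by positivity
      linarith
    refine h1.trans ?_
    gcongr
  · rw [deriv_div_const]
    have : deriv (fun s : ℝ => s + ε / 2 - h₂ x) t = 1 := by
      simp [deriv_sub_const, deriv_add_const]
    rw [this]
end

section
/- Let μ > 0, λ ∈ ℝ with λ + 2μ > 0, κ > 0, R ∈ (0, 1], and let m ≥ 2 be an integer. For ε ∈ (0, 1/2) consider the model narrow region Ω_R := {(x₁, x₂) ∈ ℝ² : |x₁| < R, −ε/2 − (κ/2)|x₁|^m < x₂ < ε/2 + (κ/2)|x₁|^m}, with δ(x₁) := ε + κ|x₁|^m, ū(x₁, x₂) := (x₂ + ε/2 + (κ/2)|x₁|^m)/δ(x₁), and f(t) := (1/2)(t − 1/2)² − 1/8. Define the vector field u := (ū, ((λ+μ)/(λ+2μ))·f(ū)·δ′)ᵀ : ℝ² → ℝ², and the Lamé operator (ℒ_{λ,μ}u)^j := μ(∂₁∂₁ + ∂₂∂₂)u^j + (λ+μ)·∂_j(∂₁u¹ + ∂₂u²) for j = 1, 2. Then there exists a constant C > 0, depending only on λ, μ,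 κ, m, R and not on ε, such that for every (x₁, x₂) ∈ Ω_R with x₁ ≠ 0: |ℒ_{λ,μ}u(x₁, x₂)| ≤ C·(|x₁|^{m−2}/δ(x₁) + |x₁|^{m−3}). -/
open MeasureTheory

/-- Partial derivative in the first variable of a function of two real variables. -/
noncomputable def pd1 (g : ℝ → ℝ → ℝ) (x y : ℝ) : ℝ := deriv (fun s => g s y) x

/-- Partial derivative in the second variable of a function of two real variables. -/
noncomputable def pd2 (g : ℝ → ℝ → ℝ) (x y : ℝ) : ℝ := deriv (fun s => g x s) y

/-! ### Auxiliary definitions and lemmas -/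

/-- Smooth model of `δ` on a half line: `ε + κ (c s)^m`. -/
noncomputable def dd (ε κ c : ℝ) (m : ℕ) (s : ℝ) : ℝ := ε + κ * (c*s)^m
/-- First derivative of `dd`. -/
noncomputable def dd1 (κ c : ℝ) (m : ℕ) (s : ℝ) : ℝ := κ*(m:ℝ)*c*(c*s)^(m-1)
/-- Second derivative of `dd`. -/
noncomputable def dd2 (κ c : ℝ) (m : ℕ) (s : ℝ) : ℝ := κ*(m:ℝ)*((m-1:ℕ):ℝ)*(c*s)^(m-2)
/-- Third derivative of `dd`. -/
noncomputable def dd3 (κ c : ℝ) (m : ℕ) (s : ℝ) : ℝ :=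
  κ*(m:ℝ)*((m-1:ℕ):ℝ)*((m-2:ℕ):ℝ)*c*(c*s)^(m-3)

lemma hpowc (c : ℝ) (k : ℕ) (s : ℝ) :
    HasDerivAt (fun s : ℝ => (c*s)^k) ((k:ℝ)*(c*s)^(k-1)*c) s := by
  simpa using ((hasDerivAt_id s).const_mul c).fun_pow k

lemma hasDerivAt_dd (ε κ c : ℝ) (m : ℕ) (s : ℝ) :
    HasDerivAt (dd ε κ c m) (dd1 κ c m s) s := by
  have h := ((hpowc c m s).const_mul κ).const_add ε
  have hv : dd1 κ c m s = κ * ((m:ℝ)*(c*s)^(m-1)*c) := by unfold dd1; ring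
  rw [hv]; exact h

lemma hasDerivAt_dd1 (κ c : ℝ) (m : ℕ) (s : ℝ) (hc2 : c*c = 1) :
    HasDerivAt (dd1 κ c m) (dd2 κ c m s) s := by
  have h := (hpowc c (m-1) s).const_mul (κ*(m:ℝ)*c)
  rw [show m-1-1 = m-2 from by omega] at h
  have hv : dd2 κ c m s = κ*(m:ℝ)*c * (((m-1:ℕ):ℝ)*(c*s)^(m-2)*c) := by
    unfold dd2
    linear_combination (-(κ*(m:ℝ)*((m-1:ℕ):ℝ)*(c*s)^(m-2))) * hc2
  rw [hv]; exact h

lemma hasDerivAt_dd2 (κ c : ℝ) (m : ℕ) (s : ℝ) :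
    HasDerivAt (dd2 κ c m) (dd3 κ c m s) s := by
  have h := (hpowc c (m-2) s).const_mul (κ*(m:ℝ)*((m-1:ℕ):ℝ))
  rw [show m-2-1 = m-3 from by omega] at h
  have hv : dd3 κ c m s = κ*(m:ℝ)*((m-1:ℕ):ℝ) * (((m-2:ℕ):ℝ)*(c*s)^(m-3)*c) := by
    unfold dd3; ring
  rw [hv]; exact h

lemma sqrt_sq_add_sq_le (a b : ℝ) : Real.sqrt (a^2 + b^2) ≤ |a| + |b| := by
  rw [show |a| + |b| = Real.sqrt ((|a|+|b|)^2) from (Real.sqrt_sq (by positivity)).symm]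
  apply Real.sqrt_le_sqrt
  nlinarith [abs_nonneg a, abs_nonneg b, sq_abs a, sq_abs b, abs_nonneg (a*b),
    neg_abs_le (a*b), abs_mul a b]

set_option maxHeartbeats 2000000 in
/-- The final estimation lemma: bounding the explicit Lamé expression. -/
lemma final_bound (lam mu κ w D t c : ℝ) (m : ℕ) (hmu : 0 < mu) (hlm : 0 < lam + 2 * mu)
    (hκ : 0 < κ) (hm : 2 ≤ m) (hw : 0 < w) (hD : 0 < D) (hκW : κ * w ^ m ≤ D)
    (ht : |t| ≤ D / 2) (hc2 : c * c = 1) (hcabs : |c| = 1) :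
    Real.sqrt
      ((mu * (2*t*(κ*(m:ℝ)*c*w^(m-1))^2/D^3 - t*(κ*(m:ℝ)*((m-1:ℕ):ℝ)*w^(m-2))/D^2 + 0) +
        (lam+mu) * ((1 - (lam+mu)/(lam+2*mu)) *
          (2*t*(κ*(m:ℝ)*c*w^(m-1))^2/D^3 - t*(κ*(m:ℝ)*((m-1:ℕ):ℝ)*w^(m-2))/D^2)))^2 +
       (mu * ((lam+mu)/(lam+2*mu) *
            ((1/2*(t/D)^2 - 1/8)*(κ*(m:ℝ)*((m-1:ℕ):ℝ)*((m-2:ℕ):ℝ)*c*w^(m-3)) -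
              3*t^2*((κ*(m:ℝ)*c*w^(m-1))*(κ*(m:ℝ)*((m-1:ℕ):ℝ)*w^(m-2)))/D^3 +
              3*t^2*(κ*(m:ℝ)*c*w^(m-1))^3/D^4) +
          (lam+mu)/(lam+2*mu) * (κ*(m:ℝ)*c*w^(m-1)) / D^2) +
        (lam+mu) * (((lam+mu)/(lam+2*mu) - 1) * (κ*(m:ℝ)*c*w^(m-1)) / D^2))^2)
    ≤ (|mu + (lam+mu)*(mu/(lam+2*mu))| * (2*κ*(m:ℝ)^2) +
        mu*(3*|(lam+mu)/(lam+2*mu)| * κ*(m:ℝ)^3) + 1) *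
      (w ^ ((m:ℝ)-2)/D + w ^ ((m:ℝ)-3)) := by
  have hlm' : lam + 2*mu ≠ 0 := hlm.ne'
  set A := (lam+mu)/(lam+2*mu) with hA
  set P1 := κ*(m:ℝ)*c*w^(m-1) with hP1
  set P2 := κ*(m:ℝ)*((m-1:ℕ):ℝ)*w^(m-2) with hP2
  set P3 := κ*(m:ℝ)*((m-1:ℕ):ℝ)*((m-2:ℕ):ℝ)*c*w^(m-3) with hP3
  set Y := w ^ ((m:ℝ)-3) with hY
  set X := w ^ ((m:ℝ)-2) with hX
  set k1 := mu + (lam+mu)*(mu/(lam+2*mu)) with hk1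
  have hYnn : 0 ≤ Y := by rw [hY]; positivity
  have hXnn : 0 ≤ X := by rw [hX]; positivity
  -- rewrite the two components
  have hL1eq : mu * (2*t*P1^2/D^3 - t*P2/D^2 + 0) +
      (lam+mu) * ((1 - A) * (2*t*P1^2/D^3 - t*P2/D^2)) =
      k1 * (2*t*P1^2/D^3 - t*P2/D^2) := by
    rw [hA, hk1]; field_simp [show lam + mu*2 ≠ 0 by rw [mul_comm]; exact hlm']; ring
  have hL2eq : mu * (A * ((1/2*(t/D)^2 - 1/8)*P3 - 3*t^2*(P1*P2)/D^3 + 3*t^2*P1^3/D^4) +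
      A * P1 / D^2) + (lam+mu) * ((A - 1) * P1 / D^2) =
      mu * (A * ((1/2*(t/D)^2 - 1/8)*P3 - 3*t^2*(P1*P2)/D^3 + 3*t^2*P1^3/D^4)) := by
    rw [hA]; field_simp [show lam + mu*2 ≠ 0 by rw [mul_comm]; exact hlm']; ring
  rw [hL1eq, hL2eq]
  set V1 := 2*t*P1^2/D^3 - t*P2/D^2 with hV1
  set V4 := (1/2*(t/D)^2 - 1/8)*P3 - 3*t^2*(P1*P2)/D^3 + 3*t^2*P1^3/D^4 with hV4
  -- basic numeric facts
  have hmcast : (2:ℝ) ≤ (m:ℝ) := by exact_mod_cast hm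
  have hm1le : ((m-1:ℕ):ℝ) ≤ (m:ℝ) := by exact_mod_cast Nat.sub_le m 1
  have hm2le : ((m-2:ℕ):ℝ) ≤ (m:ℝ) := by exact_mod_cast Nat.sub_le m 2
  have hm1nn : (0:ℝ) ≤ ((m-1:ℕ):ℝ) := Nat.cast_nonneg _
  have hm2nn : (0:ℝ) ≤ ((m-2:ℕ):ℝ) := Nat.cast_nonneg _
  have htsq : t^2 ≤ D^2/4 := by
    have h := abs_le.mp ht
    have h2 := sq_le_sq' h.1 h.2
    nlinarith [h2]
  -- power bridges
  have hw2 : w^(m-2) = X := by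
    rw [hX, ← Real.rpow_natCast w (m-2)]
    congr 1
    push_cast [Nat.cast_sub hm]
    ring
  have hb1 : w^(m-1)*w^(m-2) = w^m * Y := by
    have h1 : w^(m-1)*w^(m-2) = w^(2*m-3) := by
      rw [← pow_add]; congr 1; omega
    have h2 : (w:ℝ)^(2*m-3) = w^m * Y := by
      rw [hY, ← Real.rpow_natCast w (2*m-3),
        show ((2*m-3:ℕ):ℝ) = (m:ℝ) + ((m:ℝ)-3) from by
          push_cast [Nat.cast_sub (show 3 ≤ 2*m by omega)]; ring,
        Real.rpow_add hw, Real.rpow_natCast]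
    rw [h1, h2]
  have hb2 : (w^(m-1))^3 = w^m * w^m * Y := by
    have h1 : (w^(m-1))^3 = w^(3*m-3) := by
      rw [← pow_mul]; congr 1; omega
    have h2 : (w:ℝ)^(3*m-3) = w^m * w^m * Y := by
      rw [hY, ← Real.rpow_natCast w (3*m-3),
        show ((3*m-3:ℕ):ℝ) = (m:ℝ) + ((m:ℝ) + ((m:ℝ)-3)) from by
          push_cast [Nat.cast_sub (show 3 ≤ 3*m by omega)]; ring,
        Real.rpow_add hw, Real.rpow_add hw, Real.rpow_natCast]
      ring
    rw [h1, h2]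
  -- |V1| bound
  have hp1sq : P1^2 = κ^2*(m:ℝ)^2*(w^(m-2)*w^m) := by
    rw [hP1]
    have hsplit : w^(m-1)*w^(m-1) = w^(m-2)*w^m := by
      rw [← pow_add, ← pow_add]; congr 1; omega
    calc (κ*(m:ℝ)*c*w^(m-1))^2 = κ^2*(m:ℝ)^2*(w^(m-1)*w^(m-1))*(c*c) := by ring
      _ = κ^2*(m:ℝ)^2*(w^(m-2)*w^m) := by rw [hc2, hsplit, mul_one]
  have h1 : P1^2 ≤ κ*(m:ℝ)^2*w^(m-2)*D := by
    rw [hp1sq]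
    have h := mul_le_mul_of_nonneg_left hκW (show (0:ℝ) ≤ κ*(m:ℝ)^2*w^(m-2) by positivity)
    linarith only [h]
  have h2 : P2 ≤ κ*(m:ℝ)^2*w^(m-2) := by
    rw [hP2]
    have hnn : (0:ℝ) ≤ κ*(m:ℝ)*w^(m-2) := by positivity
    linarith only [mul_le_mul_of_nonneg_left hm1le hnn]
  have h2nn : 0 ≤ P2 := by rw [hP2]; positivity
  have hVeq : V1 = t*((2*P1^2 - P2*D)/D^3) := by rw [hV1]; field_simp
  have hnum : |2*P1^2 - P2*D| ≤ 3*(κ*(m:ℝ)^2*w^(m-2))*D := by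
    have htri : |2*P1^2 - P2*D| ≤ |2*P1^2| + |P2*D| := abs_sub _ _
    rw [abs_of_nonneg (show (0:ℝ) ≤ 2*P1^2 from by positivity),
      abs_of_nonneg (mul_nonneg h2nn hD.le)] at htri
    linarith only [htri, h1, mul_le_mul_of_nonneg_right h2 hD.le]
  have hV1b : |V1| ≤ 2*κ*(m:ℝ)^2*(X/D) := by
    have hD3 : (0:ℝ) < D^3 := pow_pos hD 3
    calc |V1| = |t| * (|2*P1^2 - P2*D|/D^3) := by
          rw [hVeq, abs_mul, abs_div, abs_of_pos hD3]
      _ ≤ (D/2) * ((3*(κ*(m:ℝ)^2*w^(m-2))*D)/D^3) := by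
          apply mul_le_mul ht ((div_le_div_iff_of_pos_right hD3).mpr hnum)
            (div_nonneg (abs_nonneg _) hD3.le) (by linarith)
      _ = (3/2)*(κ*(m:ℝ)^2)*(w^(m-2)/D) := by field_simp
      _ ≤ 2*κ*(m:ℝ)^2*(X/D) := by
          rw [hw2]
          have hz : (0:ℝ) ≤ X/D := div_nonneg hXnn hD.le
          linarith only [mul_nonneg (mul_nonneg hκ.le (sq_nonneg (m:ℝ))) hz]
  -- |V4| bound
  have habsP1 : |P1| = κ*(m:ℝ)*w^(m-1) := by
    have h' : P1 = (κ*(m:ℝ)*w^(m-1)) * c := by rw [hP1]; ring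
    rw [h', abs_mul, hcabs, mul_one,
      abs_of_nonneg (show (0:ℝ) ≤ κ*(m:ℝ)*w^(m-1) from by positivity)]
  have habsF : |1/2*(t/D)^2 - 1/8| ≤ 1/4 := by
    have hq : (t/D)^2 ≤ 1/4 := by
      rw [div_pow, div_le_iff₀ (by positivity : (0:ℝ) < D^2)]
      linarith only [htsq]
    have hq0 : 0 ≤ (t/D)^2 := sq_nonneg _
    rw [abs_le]
    constructor
    · linarith only [hq0]
    · linarith only [hq]
  have habsP3 : |P3| ≤ κ*(m:ℝ)^3*Y := by
    have habsP3' : |P3| = κ*(m:ℝ)*((m-1:ℕ):ℝ)*((m-2:ℕ):ℝ)*w^(m-3) := by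
      have h' : P3 = (κ*(m:ℝ)*((m-1:ℕ):ℝ)*((m-2:ℕ):ℝ)*w^(m-3)) * c := by
        rw [hP3]; ring
      rw [h', abs_mul, hcabs, mul_one,
        abs_of_nonneg (show (0:ℝ) ≤ κ*(m:ℝ)*((m-1:ℕ):ℝ)*((m-2:ℕ):ℝ)*w^(m-3) from by positivity)]
    rcases Nat.lt_or_ge m 3 with h3 | h3
    · have hzero : (m-2:ℕ) = 0 := by omega
      rw [habsP3', hzero]
      simp only [Nat.cast_zero]
      have : κ*(m:ℝ)*((m-1:ℕ):ℝ)*0*w^(m-3) = 0 := by ring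
      rw [this]
      positivity
    · have hw3 : w^(m-3:ℕ) = Y := by
        rw [hY, ← Real.rpow_natCast w (m-3)]
        congr 1
        push_cast [Nat.cast_sub h3]
        ring
      rw [habsP3', hw3]
      have hab : ((m-1:ℕ):ℝ)*((m-2:ℕ):ℝ) ≤ (m:ℝ)*(m:ℝ) :=
        mul_le_mul hm1le hm2le hm2nn (by positivity)
      have hnn : (0:ℝ) ≤ κ*(m:ℝ)*Y := by positivity
      linarith only [mul_le_mul_of_nonneg_left hab hnn]
  have hTA : |(1/2*(t/D)^2 - 1/8)*P3| ≤ 1/4*(κ*(m:ℝ)^3*Y) := by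
    rw [abs_mul]
    exact mul_le_mul habsF habsP3 (abs_nonneg _) (by norm_num)
  have hTB : |3*t^2*(P1*P2)/D^3| ≤ 3/4*(κ*(m:ℝ)^3*Y) := by
    have hD3 : (0:ℝ) < D^3 := pow_pos hD 3
    have habs1 : |3*t^2*(P1*P2)| = |P1| * (3*t^2*P2) := by
      rw [show (3*t^2*(P1*P2) : ℝ) = P1 * (3*t^2*P2) from by ring, abs_mul,
        abs_of_nonneg (show (0:ℝ) ≤ 3*t^2*P2 from
          mul_nonneg (mul_nonneg (by norm_num) (sq_nonneg t)) h2nn)]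
    have heq : |3*t^2*(P1*P2)/D^3| = |P1| * (3*t^2*P2)/D^3 := by
      rw [abs_div, abs_of_pos hD3, habs1]
    have hPB : |P1| * (3*t^2*P2) = 3*t^2*(κ^2*(m:ℝ)^2*((m-1:ℕ):ℝ)*(w^m * Y)) := by
      rw [habsP1, hP2, ← hb1]; ring
    rw [heq, hPB, div_le_iff₀ hD3]
    have hintB1 : (4*t^2)*(κ*w^m) ≤ D^2*D :=
      mul_le_mul (by linarith only [htsq]) hκW (by positivity) (sq_nonneg D)
    have hB1 : 0 ≤ (κ*(m:ℝ)^2*((m-1:ℕ):ℝ)*Y) * (D^2*D - 4*t^2*(κ*w^m)) := by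
      apply mul_nonneg (by positivity)
      linarith only [hintB1]
    have hB2 : 0 ≤ ((3/4)*κ*(m:ℝ)^2*Y*D^3) * ((m:ℝ) - ((m-1:ℕ):ℝ)) := by
      apply mul_nonneg
      · have : (0:ℝ) < D^3 := hD3
        positivity
      · linarith only [hm1le]
    linarith only [hB1, hB2]
  have hTC : |3*t^2*P1^3/D^4| ≤ 3/4*(κ*(m:ℝ)^3*Y) := by
    have hD4 : (0:ℝ) < D^4 := pow_pos hD 4
    have habs1 : |3*t^2*P1^3| = |P1|^3 * (3*t^2) := by
      rw [show (3*t^2*P1^3 : ℝ) = P1^3 * (3*t^2) from by ring, abs_mul, abs_pow,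
        abs_of_nonneg (show (0:ℝ) ≤ 3*t^2 from by positivity)]
    have heq : |3*t^2*P1^3/D^4| = |P1|^3 * (3*t^2)/D^4 := by
      rw [abs_div, abs_of_pos hD4, habs1]
    have hP13 : |P1|^3 * (3*t^2) = 3*t^2*(κ^3*(m:ℝ)^3*(w^m*w^m*Y)) := by
      rw [habsP1, ← hb2]; ring
    rw [heq, hP13, div_le_iff₀ hD4]
    have hk1' : (κ*w^m)*(κ*w^m) ≤ D*D := mul_le_mul hκW hκW (by positivity) hD.le
    have hC1 : 0 ≤ (κ*(m:ℝ)^3*Y*D^2) * (D^2 - 4*t^2) := by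
      apply mul_nonneg (by positivity)
      linarith only [htsq]
    have hC2 : 0 ≤ (κ*(m:ℝ)^3*Y*t^2) * (D*D - (κ*w^m)*(κ*w^m)) := by
      apply mul_nonneg (by positivity)
      linarith only [hk1']
    linarith only [hC1, hC2]
  have hV4b : |V4| ≤ 3*κ*(m:ℝ)^3*Y := by
    have htri : |V4| ≤ |(1/2*(t/D)^2 - 1/8)*P3| + |3*t^2*(P1*P2)/D^3| + |3*t^2*P1^3/D^4| := by
      rw [hV4]
      calc |(1/2*(t/D)^2 - 1/8)*P3 - 3*t^2*(P1*P2)/D^3 + 3*t^2*P1^3/D^4|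
          ≤ |(1/2*(t/D)^2 - 1/8)*P3 - 3*t^2*(P1*P2)/D^3| + |3*t^2*P1^3/D^4| := abs_add_le _ _
        _ ≤ |(1/2*(t/D)^2 - 1/8)*P3| + |3*t^2*(P1*P2)/D^3| + |3*t^2*P1^3/D^4| := by
            linarith only [abs_sub ((1/2*(t/D)^2 - 1/8)*P3) (3*t^2*(P1*P2)/D^3)]
    have hZnn : (0:ℝ) ≤ κ*(m:ℝ)^3*Y :=
      mul_nonneg (mul_nonneg hκ.le (pow_nonneg (Nat.cast_nonneg m) 3)) hYnn
    linarith only [htri, hTA, hTB, hTC, hZnn]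
  -- assemble
  calc Real.sqrt ((k1*V1)^2 + (mu*(A*V4))^2) ≤ |k1*V1| + |mu*(A*V4)| :=
        sqrt_sq_add_sq_le _ _
    _ = |k1| * |V1| + mu*(|A| * |V4|) := by
        rw [abs_mul, abs_mul, abs_mul, abs_of_pos hmu]
    _ ≤ |k1| * (2*κ*(m:ℝ)^2*(X/D)) + mu*(|A| * (3*κ*(m:ℝ)^3*Y)) := by
        apply add_le_add
        · exact mul_le_mul_of_nonneg_left hV1b (abs_nonneg _)
        · exact mul_le_mul_of_nonneg_left
            (mul_le_mul_of_nonneg_left hV4b (abs_nonneg _)) hmu.le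
    _ ≤ (|k1| * (2*κ*(m:ℝ)^2) + mu*(3*|A| * κ*(m:ℝ)^3) + 1) * (X/D + Y) := by
        have hXD : (0:ℝ) ≤ X/D := div_nonneg hXnn hD.le
        have hc1 : (0:ℝ) ≤ |k1| * (2*κ*(m:ℝ)^2) := by positivity
        have hc2' : (0:ℝ) ≤ mu*(3 * |A| * κ*(m:ℝ)^3) := by positivity
        linarith only [mul_nonneg hc1 hYnn, mul_nonneg hc2' hXD, hXD, hYnn]

set_option maxHeartbeats 2000000 in
/-- In the model narrow region with `δ(x₁) = ε + κ|x₁|^m`, the Lamé operator applied to the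
improved auxiliary function `u = (ū, ((λ+μ)/(λ+2μ))·f(ū)·δ′)ᵀ` satisfies
`|ℒ_{λ,μ}u| ≤ C(|x₁|^{m−2}/δ(x₁) + |x₁|^{m−3})` with `C` independent of `ε`. -/
theorem stmt15 (lam mu κ R : ℝ) (m : ℕ) (hmu : 0 < mu) (hlm : 0 < lam + 2 * mu)
    (hκ : 0 < κ) (hR : 0 < R) (hR1 : R ≤ 1) (hm : 2 ≤ m) :
    ∃ C > 0, ∀ ε : ℝ, 0 < ε → ε < 1 / 2 →
      ∀ x₁ x₂ : ℝ, x₁ ≠ 0 → |x₁| < R →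
        -ε / 2 - κ / 2 * |x₁| ^ m < x₂ → x₂ < ε / 2 + κ / 2 * |x₁| ^ m →
        (let δ : ℝ → ℝ := fun s => ε + κ * |s| ^ m
         let ub : ℝ → ℝ → ℝ := fun s t => (t + ε / 2 + κ / 2 * |s| ^ m) / δ s
         let f : ℝ → ℝ := fun t => (1 / 2) * (t - 1 / 2) ^ 2 - 1 / 8
         let u1 : ℝ → ℝ → ℝ := ub
         let u2 : ℝ → ℝ → ℝ :=
           fun s t => ((lam + mu) / (lam + 2 * mu)) * f (ub s t) * deriv δ s
         let L1 : ℝ := mu * (pd1 (pd1 u1) x₁ x₂ + pd2 (pd2 u1) x₁ x₂) +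
           (lam + mu) * pd1 (fun s t => pd1 u1 s t + pd2 u2 s t) x₁ x₂
         let L2 : ℝ := mu * (pd1 (pd1 u2) x₁ x₂ + pd2 (pd2 u2) x₁ x₂) +
           (lam + mu) * pd2 (fun s t => pd1 u1 s t + pd2 u2 s t) x₁ x₂
         Real.sqrt (L1 ^ 2 + L2 ^ 2) ≤
           C * (|x₁| ^ ((m : ℝ) - 2) / δ x₁ + |x₁| ^ ((m : ℝ) - 3))) := by
  refine ⟨|mu + (lam+mu)*(mu/(lam+2*mu))| * (2*κ*(m:ℝ)^2) +
      mu*(3*|(lam+mu)/(lam+2*mu)| * κ*(m:ℝ)^3) + 1, by positivity, ?_⟩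
  intro ε hε hε2 x₁ x₂ hx0 hxR hlow hupp
  intro δ ub f u1 u2 L1 L2
  have hδdef : δ = fun s => ε + κ * |s| ^ m := rfl
  have hubdef : ub = fun s t => (t + ε / 2 + κ / 2 * |s| ^ m) / δ s := rfl
  have hfdef : f = fun t => (1 / 2) * (t - 1 / 2) ^ 2 - 1 / 8 := rfl
  have hu1def : u1 = ub := rfl
  have hu2def : u2 = fun s t => ((lam + mu) / (lam + 2 * mu)) * f (ub s t) * deriv δ s := rfl
  have hL1def : L1 = mu * (pd1 (pd1 u1) x₁ x₂ + pd2 (pd2 u1) x₁ x₂) +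
      (lam + mu) * pd1 (fun s t => pd1 u1 s t + pd2 u2 s t) x₁ x₂ := rfl
  have hL2def : L2 = mu * (pd1 (pd1 u2) x₁ x₂ + pd2 (pd2 u2) x₁ x₂) +
      (lam + mu) * pd2 (fun s t => pd1 u1 s t + pd2 u2 s t) x₁ x₂ := rfl
  -- positivity of δ
  have hδpos : ∀ s : ℝ, 0 < δ s := by
    intro s
    simp only [hδdef]
    have : 0 ≤ κ * |s| ^ m := mul_nonneg hκ.le (pow_nonneg (abs_nonneg s) m)
    linarith
  have hub : ∀ s t : ℝ, ub s t = t / δ s + 1/2 := by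
    intro s t
    have h0 : δ s ≠ 0 := (hδpos s).ne'
    simp only [hubdef, hδdef] at h0 ⊢
    field_simp
    ring
  -- the sign constant
  obtain ⟨c, hc1, hcx⟩ : ∃ c : ℝ, (c = 1 ∨ c = -1) ∧ 0 < c * x₁ := by
    rcases hx0.lt_or_gt with h | h
    · exact ⟨-1, Or.inr rfl, by nlinarith⟩
    · exact ⟨1, Or.inl rfl, by nlinarith⟩
  have hc2 : c * c = 1 := by rcases hc1 with h | h <;> rw [h] <;> norm_num
  have hcabs : |c| = 1 := by rcases hc1 with h | h <;> rw [h] <;> norm_num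
  have habs : ∀ s : ℝ, 0 < c * s → |s| = c * s := by
    intro s hs
    rcases hc1 with h | h
    · rw [h] at hs ⊢; rw [one_mul] at hs ⊢; exact abs_of_pos hs
    · rw [h] at hs ⊢
      have : s < 0 := by nlinarith
      rw [abs_of_neg this]; ring
  have hUmem : ∀ s : ℝ, 0 < c * s → {y : ℝ | 0 < c * y} ∈ nhds s := by
    intro s hs
    exact (isOpen_lt continuous_const (continuous_const.mul continuous_id)).mem_nhds hs
  -- comparison with the smooth model
  have hδd : ∀ y : ℝ, 0 < c * y → δ y = dd ε κ c m y := by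
    intro y hy
    simp only [hδdef, dd]
    rw [habs y hy]
  have hδev : ∀ y : ℝ, 0 < c * y → δ =ᶠ[nhds y] dd ε κ c m :=
    fun y hy => Filter.eventuallyEq_of_mem (hUmem y hy) (fun z hz => hδd z hz)
  have hδ' : ∀ y : ℝ, 0 < c * y → deriv δ y = dd1 κ c m y :=
    fun y hy => by rw [(hδev y hy).deriv_eq, (hasDerivAt_dd ε κ c m y).deriv]
  have hdpos : ∀ y : ℝ, 0 < c * y → 0 < dd ε κ c m y :=
    fun y hy => by rw [← hδd y hy]; exact hδpos y
  have hdx : 0 < dd ε κ c m x₁ := hdpos x₁ hcx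
  -- vertical derivatives (exact, valid everywhere)
  have Hub2 : ∀ s t' : ℝ, HasDerivAt (fun t'' => ub s t'') (1 / δ s) t' := by
    intro s t'
    have h : (fun t'' => ub s t'') = fun t'' => (t'' + (ε/2 + κ/2 * |s|^m)) / δ s := by
      funext u; simp only [hubdef]; ring
    rw [h]
    exact ((hasDerivAt_id t').add_const (ε/2 + κ/2 * |s|^m)).div_const (δ s)
  have hpd2u1 : ∀ s t' : ℝ, pd2 u1 s t' = 1 / δ s := by
    intro s t'
    simp only [pd2, hu1def]
    exact (Hub2 s t').deriv
  have hpd2u2 : ∀ s t' : ℝ, pd2 u2 s t' =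
      (lam+mu)/(lam+2*mu) * (t' / δ s ^ 2) * deriv δ s := by
    intro s t'
    simp only [pd2, hu2def, hfdef]
    have h2 : HasDerivAt (fun t'' => ub s t'' - 1/2) (1 / δ s) t' := (Hub2 s t').sub_const _
    have h4 := ((((h2.fun_pow 2).const_mul (1/2:ℝ)).sub_const (1/8:ℝ)).const_mul
      ((lam+mu)/(lam+2*mu))).mul_const (deriv δ s)
    rw [h4.deriv, hub s t']
    have h0 : δ s ≠ 0 := (hδpos s).ne'
    simp only [Nat.reduceSub, pow_one]; field_simp [(by linarith : (0:ℝ) < lam + mu*2).ne']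
    ring
  -- horizontal derivatives on the half line
  have hpd1u1 : ∀ (t : ℝ) (s : ℝ), 0 < c * s →
      pd1 u1 s t = -t * dd1 κ c m s / dd ε κ c m s ^ 2 := by
    intro t s hs
    simp only [pd1]
    have hev : (fun s' => u1 s' t) =ᶠ[nhds s] fun s' => t / dd ε κ c m s' + 1/2 :=
      Filter.eventuallyEq_of_mem (hUmem s hs) (fun y hy => by
        simp only [hu1def]
        rw [hub y t, hδd y hy])
    rw [hev.deriv_eq]
    have H := ((hasDerivAt_const s t).fun_div (hasDerivAt_dd ε κ c m s)
      (hdpos s hs).ne').add_const (1/2 : ℝ)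
    rw [H.deriv]
    ring
  have hpd1u2 : ∀ s : ℝ, 0 < c * s → pd1 u2 s x₂ =
      (lam+mu)/(lam+2*mu) * (1/2 * (x₂ / dd ε κ c m s)^2 - 1/8) * dd2 κ c m s -
      (lam+mu)/(lam+2*mu) * x₂^2 * (dd1 κ c m s ^ 2 / dd ε κ c m s ^ 3) := by
    intro s hs
    have hds : dd ε κ c m s ≠ 0 := (hdpos s hs).ne'
    simp only [pd1]
    have hev : (fun s' => u2 s' x₂) =ᶠ[nhds s] fun s' =>
        (lam+mu)/(lam+2*mu) * (1/2 * (x₂ / dd ε κ c m s')^2 - 1/8) * dd1 κ c m s' :=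
      Filter.eventuallyEq_of_mem (hUmem s hs) (fun y hy => by
        simp only [hu2def, hfdef]
        rw [hub y x₂, hδd y hy, hδ' y hy]
        ring)
    rw [hev.deriv_eq]
    have h1 : HasDerivAt (fun s' => x₂ / dd ε κ c m s')
        ((0 * dd ε κ c m s - x₂ * dd1 κ c m s) / dd ε κ c m s ^ 2) s :=
      (hasDerivAt_const s x₂).div (hasDerivAt_dd ε κ c m s) hds
    have h3 := ((((h1.fun_pow 2).const_mul (1/2:ℝ)).sub_const (1/8:ℝ)).const_mul
      ((lam+mu)/(lam+2*mu))).fun_mul (hasDerivAt_dd1 κ c m s hc2)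
    rw [h3.deriv]
    simp only [Nat.reduceSub, pow_one]; field_simp [(by linarith : (0:ℝ) < lam + mu*2).ne']
    ring
  -- the six second-order derivatives
  have e1 : pd1 (pd1 u1) x₁ x₂ =
      2*x₂*dd1 κ c m x₁^2/dd ε κ c m x₁^3 - x₂*dd2 κ c m x₁/dd ε κ c m x₁^2 := by
    have hunf : pd1 (pd1 u1) x₁ x₂ = deriv (fun s => deriv (fun s' => u1 s' x₂) s) x₁ := rfl
    rw [hunf]
    have hev : (fun s => deriv (fun s' => u1 s' x₂) s) =ᶠ[nhds x₁]
        fun s => -x₂ * dd1 κ c m s / dd ε κ c m s ^ 2 :=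
      Filter.eventuallyEq_of_mem (hUmem x₁ hcx) (fun y hy => hpd1u1 x₂ y hy)
    rw [hev.deriv_eq]
    have H := ((hasDerivAt_dd1 κ c m x₁ hc2).const_mul (-x₂)).fun_div
      ((hasDerivAt_dd ε κ c m x₁).fun_pow 2) (pow_ne_zero 2 hdx.ne')
    rw [H.deriv]
    field_simp
    ring
  have e2 : pd2 (pd2 u1) x₁ x₂ = 0 := by
    have hunf : pd2 (pd2 u1) x₁ x₂ =
        deriv (fun t' => deriv (fun t'' => u1 x₁ t'') t') x₂ := rfl
    rw [hunf]
    have hfun : (fun t' => deriv (fun t'' => u1 x₁ t'') t') = fun _ => 1 / δ x₁ := by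
      funext t'; exact hpd2u1 x₁ t'
    rw [hfun]
    exact deriv_const x₂ _
  have e3 : pd1 (fun s t => pd1 u1 s t + pd2 u2 s t) x₁ x₂ =
      (1 - (lam+mu)/(lam+2*mu)) *
        (2*x₂*dd1 κ c m x₁^2/dd ε κ c m x₁^3 - x₂*dd2 κ c m x₁/dd ε κ c m x₁^2) := by
    have hunf : pd1 (fun s t => pd1 u1 s t + pd2 u2 s t) x₁ x₂ =
        deriv (fun s => deriv (fun s' => u1 s' x₂) s + deriv (fun t' => u2 s t') x₂) x₁ := rfl
    rw [hunf]
    have hev : (fun s => deriv (fun s' => u1 s' x₂) s + deriv (fun t' => u2 s t') x₂)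
        =ᶠ[nhds x₁] fun s => -x₂ * dd1 κ c m s / dd ε κ c m s ^ 2 +
          (lam+mu)/(lam+2*mu) * (x₂ / dd ε κ c m s ^ 2) * dd1 κ c m s :=
      Filter.eventuallyEq_of_mem (hUmem x₁ hcx) (fun y hy => by
        have h1 : deriv (fun s' => u1 s' x₂) y = -x₂ * dd1 κ c m y / dd ε κ c m y ^ 2 :=
          hpd1u1 x₂ y hy
        have h2 := hpd2u2 y x₂
        rw [hδd y hy, hδ' y hy] at h2
        have h2' : deriv (fun t' => u2 y t') x₂ =
            (lam+mu)/(lam+2*mu) * (x₂ / dd ε κ c m y ^ 2) * dd1 κ c m y := h2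
        show deriv (fun s' => u1 s' x₂) y + deriv (fun t' => u2 y t') x₂ = _
        rw [h1, h2'])
    rw [hev.deriv_eq]
    have H1 := ((hasDerivAt_dd1 κ c m x₁ hc2).const_mul (-x₂)).fun_div
      ((hasDerivAt_dd ε κ c m x₁).fun_pow 2) (pow_ne_zero 2 hdx.ne')
    have H2 := (((hasDerivAt_const x₁ x₂).fun_div ((hasDerivAt_dd ε κ c m x₁).fun_pow 2)
      (pow_ne_zero 2 hdx.ne')).const_mul ((lam+mu)/(lam+2*mu))).fun_mul
      (hasDerivAt_dd1 κ c m x₁ hc2)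
    rw [(H1.fun_add H2).deriv]
    field_simp
    ring
  have e4 : pd1 (pd1 u2) x₁ x₂ = (lam+mu)/(lam+2*mu) *
      ((1/2*(x₂/dd ε κ c m x₁)^2 - 1/8) * dd3 κ c m x₁ -
        3*x₂^2*(dd1 κ c m x₁ * dd2 κ c m x₁)/dd ε κ c m x₁^3 +
        3*x₂^2*dd1 κ c m x₁^3/dd ε κ c m x₁^4) := by
    have hunf : pd1 (pd1 u2) x₁ x₂ = deriv (fun s => deriv (fun s' => u2 s' x₂) s) x₁ := rfl
    rw [hunf]
    have hev : (fun s => deriv (fun s' => u2 s' x₂) s) =ᶠ[nhds x₁] fun s =>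
        (lam+mu)/(lam+2*mu) * (1/2 * (x₂ / dd ε κ c m s)^2 - 1/8) * dd2 κ c m s -
        (lam+mu)/(lam+2*mu) * x₂^2 * (dd1 κ c m s ^ 2 / dd ε κ c m s ^ 3) :=
      Filter.eventuallyEq_of_mem (hUmem x₁ hcx) (fun y hy => hpd1u2 y hy)
    rw [hev.deriv_eq]
    have h1 : HasDerivAt (fun s' => x₂ / dd ε κ c m s')
        ((0 * dd ε κ c m x₁ - x₂ * dd1 κ c m x₁) / dd ε κ c m x₁ ^ 2) x₁ :=
      (hasDerivAt_const x₁ x₂).div (hasDerivAt_dd ε κ c m x₁) hdx.ne'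
    have h3 := ((((h1.fun_pow 2).const_mul (1/2:ℝ)).sub_const (1/8:ℝ)).const_mul
      ((lam+mu)/(lam+2*mu))).fun_mul (hasDerivAt_dd2 κ c m x₁)
    have h4 := (((hasDerivAt_dd1 κ c m x₁ hc2).fun_pow 2).fun_div ((hasDerivAt_dd ε κ c m x₁).fun_pow 3)
      (pow_ne_zero 3 hdx.ne')).const_mul ((lam+mu)/(lam+2*mu) * x₂^2)
    rw [(h3.fun_sub h4).deriv]
    simp only [Nat.reduceSub, pow_one]; field_simp [(by linarith : (0:ℝ) < lam + mu*2).ne']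
    ring
  have e5 : pd2 (pd2 u2) x₁ x₂ =
      (lam+mu)/(lam+2*mu) * dd1 κ c m x₁ / dd ε κ c m x₁ ^ 2 := by
    have hunf : pd2 (pd2 u2) x₁ x₂ =
        deriv (fun t' => deriv (fun t'' => u2 x₁ t'') t') x₂ := rfl
    rw [hunf]
    have hfun : (fun t' => deriv (fun t'' => u2 x₁ t'') t') =
        fun t' => (lam+mu)/(lam+2*mu) * (t' / δ x₁ ^ 2) * deriv δ x₁ := by
      funext t'; exact hpd2u2 x₁ t'
    rw [hfun]
    have Hid : HasDerivAt (fun y : ℝ => y) (1:ℝ) x₂ := hasDerivAt_id x₂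
    have H := ((Hid.div_const (δ x₁ ^ 2)).const_mul
      ((lam+mu)/(lam+2*mu))).mul_const (deriv δ x₁)
    rw [H.deriv, hδ' x₁ hcx, hδd x₁ hcx]
    ring
  have e6 : pd2 (fun s t => pd1 u1 s t + pd2 u2 s t) x₁ x₂ =
      ((lam+mu)/(lam+2*mu) - 1) * dd1 κ c m x₁ / dd ε κ c m x₁ ^ 2 := by
    have hunf : pd2 (fun s t => pd1 u1 s t + pd2 u2 s t) x₁ x₂ =
        deriv (fun t' => deriv (fun s' => u1 s' t') x₁ + deriv (fun t'' => u2 x₁ t'') t') x₂ :=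
      rfl
    rw [hunf]
    have hfun : (fun t' => deriv (fun s' => u1 s' t') x₁ + deriv (fun t'' => u2 x₁ t'') t') =
        fun t' => -t' * dd1 κ c m x₁ / dd ε κ c m x₁ ^ 2 +
          (lam+mu)/(lam+2*mu) * (t' / δ x₁ ^ 2) * deriv δ x₁ := by
      funext t'
      have h1 : deriv (fun s' => u1 s' t') x₁ = -t' * dd1 κ c m x₁ / dd ε κ c m x₁ ^ 2 :=
        hpd1u1 t' x₁ hcx
      have h2 : deriv (fun t'' => u2 x₁ t'') t' =
          (lam+mu)/(lam+2*mu) * (t' / δ x₁ ^ 2) * deriv δ x₁ := hpd2u2 x₁ t'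
      rw [h1, h2]
    rw [hfun]
    have Hid : HasDerivAt (fun y : ℝ => y) (1:ℝ) x₂ := hasDerivAt_id x₂
    have H1 := (Hid.fun_neg.mul_const (dd1 κ c m x₁)).div_const
      (dd ε κ c m x₁ ^ 2)
    have H2 := ((Hid.div_const (δ x₁ ^ 2)).const_mul
      ((lam+mu)/(lam+2*mu))).mul_const (deriv δ x₁)
    rw [(H1.fun_add H2).deriv, hδ' x₁ hcx, hδd x₁ hcx]
    ring
  -- rewrite in terms of w = |x₁|
  have hwpos : 0 < |x₁| := abs_pos.mpr hx0
  have hax : c * x₁ = |x₁| := (habs x₁ hcx).symm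
  have hddx : dd ε κ c m x₁ = ε + κ*|x₁|^m := by unfold dd; rw [hax]
  have hd1x : dd1 κ c m x₁ = κ*(m:ℝ)*c*|x₁|^(m-1) := by unfold dd1; rw [hax]
  have hd2x : dd2 κ c m x₁ = κ*(m:ℝ)*((m-1:ℕ):ℝ)*|x₁|^(m-2) := by unfold dd2; rw [hax]
  have hd3x : dd3 κ c m x₁ = κ*(m:ℝ)*((m-1:ℕ):ℝ)*((m-2:ℕ):ℝ)*c*|x₁|^(m-3) := by
    unfold dd3; rw [hax]
  have hδx : δ x₁ = ε + κ*|x₁|^m := by simp only [hδdef]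
  have hDpos : 0 < ε + κ*|x₁|^m := by
    have : 0 ≤ κ * |x₁| ^ m := mul_nonneg hκ.le (pow_nonneg (abs_nonneg x₁) m)
    linarith
  have hκW : κ*|x₁|^m ≤ ε + κ*|x₁|^m := by linarith
  have ht : |x₂| ≤ (ε + κ*|x₁|^m)/2 := abs_le.mpr ⟨by linarith, by linarith⟩
  rw [hL1def, hL2def, e1, e2, e3, e4, e5, e6, hd1x, hd2x, hd3x, hddx, hδx]
  exact final_bound lam mu κ (|x₁|) (ε + κ*|x₁|^m) x₂ c m hmu hlm hκ hm hwpos hDpos hκW ht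
    hc2 hcabs
end

section
/- Let κ > 0, R > 0, and let m ≥ 2 be an integer. For ε ∈ (0, 1/2) consider the model narrow region Ω_R := {(x₁, x₂) ∈ ℝ² : |x₁| < R, −ε/2 − (κ/2)|x₁|^m < x₂ < ε/2 + (κ/2)|x₁|^m}, with δ(x₁) := ε + κ|x₁|^m, ū(x₁, x₂) := (x₂ + ε/2 + (κ/2)|x₁|^m)/δ(x₁), and f(t) := (1/2)(t − 1/2)² − 1/8. Define g(x₁, x₂) := f(ū(x₁, x₂))·δ′(x₁). Then there exists a constant C > 0, depending only on κ, m, R and not on ε, such that for all ε ∈ (0, 1/2): ∫_{Ω_R} |∇g|² dx ≤ C, where the integral is with respect to two-dimensional Lebesgue measure. -/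
open MeasureTheory

open Filter


noncomputable def dl (κ ε : ℝ) (n : ℕ) (s : ℝ) : ℝ := ε + κ * |s| ^ (n + 2)
noncomputable def Af (κ : ℝ) (n : ℕ) (s : ℝ) : ℝ := κ ^ 2 * ((n : ℝ) + 2) ^ 2 * |s| ^ (2 * n + 2)
noncomputable def Bf (κ : ℝ) (n : ℕ) (s : ℝ) : ℝ := κ * ((n : ℝ) + 2) * ((n : ℝ) + 1) * |s| ^ n

lemma dl_pos {κ ε : ℝ} (hκ : 0 < κ) (hε : 0 < ε) (n : ℕ) (s : ℝ) : 0 < dl κ ε n s := by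
  have : 0 ≤ κ * |s| ^ (n + 2) := by positivity
  unfold dl; linarith

lemma hasDerivAt_dl_pos (κ ε : ℝ) (n : ℕ) {s : ℝ} (hs : 0 < s) :
    HasDerivAt (fun x : ℝ => ε + κ * |x| ^ (n + 2)) (κ * ((n + 2 : ℕ) * s ^ (n + 1))) s := by
  have h : HasDerivAt (fun x : ℝ => ε + κ * x ^ (n + 2)) (κ * ((n + 2 : ℕ) * s ^ (n + 1))) s := by
    simpa using ((hasDerivAt_pow (n + 2) s).const_mul κ).const_add ε
  apply h.congr_of_eventuallyEq
  filter_upwards [eventually_gt_nhds hs] with x hx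
  rw [abs_of_pos hx]

lemma hasDerivAt_dl_neg (κ ε : ℝ) (n : ℕ) {s : ℝ} (hs : s < 0) :
    HasDerivAt (fun x : ℝ => ε + κ * |x| ^ (n + 2)) (-(κ * ((n + 2 : ℕ) * (-s) ^ (n + 1)))) s := by
  have h0 : HasDerivAt (fun y : ℝ => ε + κ * y ^ (n + 2)) (κ * ((n + 2 : ℕ) * (-s) ^ (n + 1))) (-s) := by
    simpa using ((hasDerivAt_pow (n + 2) (-s)).const_mul κ).const_add ε
  have hneg : HasDerivAt (fun x : ℝ => -x) (-1) s := (hasDerivAt_id s).neg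
  have h1 : HasDerivAt (fun x : ℝ => ε + κ * (-x) ^ (n + 2))
      (κ * ((n + 2 : ℕ) * (-s) ^ (n + 1)) * (-1)) s := h0.comp s hneg
  have h2 : HasDerivAt (fun x : ℝ => ε + κ * (-x) ^ (n + 2))
      (-(κ * ((n + 2 : ℕ) * (-s) ^ (n + 1)))) s := by
    convert h1 using 1; ring
  apply h2.congr_of_eventuallyEq
  filter_upwards [eventually_lt_nhds hs] with x hx
  rw [abs_of_neg hx]

lemma deriv_dl_pos (κ ε : ℝ) (n : ℕ) {s : ℝ} (hs : 0 < s) :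
    deriv (fun x : ℝ => ε + κ * |x| ^ (n + 2)) s = κ * ((n + 2 : ℕ) * s ^ (n + 1)) :=
  (hasDerivAt_dl_pos κ ε n hs).deriv

lemma deriv_dl_neg (κ ε : ℝ) (n : ℕ) {s : ℝ} (hs : s < 0) :
    deriv (fun x : ℝ => ε + κ * |x| ^ (n + 2)) s = -(κ * ((n + 2 : ℕ) * (-s) ^ (n + 1))) :=
  (hasDerivAt_dl_neg κ ε n hs).deriv
noncomputable def XYf (κ ε : ℝ) (n : ℕ) (s t : ℝ) : ℝ :=
  -(t ^ 2 * Af κ n s / dl κ ε n s ^ 3) + (t ^ 2 / (2 * dl κ ε n s ^ 2) - 1 / 8) * Bf κ n s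

/-- expected value of pd1 with plain powers of `s` (valid form at `0 < s`). -/
noncomputable def XYpoly (κ ε : ℝ) (n : ℕ) (s t : ℝ) : ℝ :=
  -(t ^ 2 * (κ ^ 2 * ((n : ℝ) + 2) ^ 2 * s ^ (2 * n + 2)) / (ε + κ * s ^ (n + 2)) ^ 3) +
    (t ^ 2 / (2 * (ε + κ * s ^ (n + 2)) ^ 2) - 1 / 8) * (κ * ((n : ℝ) + 2) * ((n : ℝ) + 1) * s ^ n)

lemma hasDerivAt_phi (κ ε : ℝ) (n : ℕ) (t : ℝ) {s : ℝ} (hu : 0 < ε + κ * s ^ (n + 2)) :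
    HasDerivAt (fun x : ℝ => ((1 / 2) * (t / (ε + κ * x ^ (n + 2))) ^ 2 - 1 / 8) *
      (κ * ((n + 2 : ℕ) : ℝ) * x ^ (n + 1))) (XYpoly κ ε n s t) s := by
  have hu' : HasDerivAt (fun x : ℝ => ε + κ * x ^ (n + 2)) (κ * ((n + 2 : ℕ) * s ^ (n + 1))) s := by
    simpa using ((hasDerivAt_pow (n + 2) s).const_mul κ).const_add ε
  have hq : HasDerivAt (fun x : ℝ => t / (ε + κ * x ^ (n + 2)))
      ((0 * (ε + κ * s ^ (n + 2)) - t * (κ * ((n + 2 : ℕ) * s ^ (n + 1)))) / (ε + κ * s ^ (n + 2)) ^ 2) s :=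
    (hasDerivAt_const s t).div hu' hu.ne'
  have h2 := ((hq.fun_pow 2).const_mul (1 / 2 : ℝ)).sub_const (1 / 8)
  have hp : HasDerivAt (fun x : ℝ => κ * ((n + 2 : ℕ) : ℝ) * x ^ (n + 1))
      (κ * ((n + 2 : ℕ) : ℝ) * (((n + 1 : ℕ) : ℝ) * s ^ n)) s := by
    simpa [mul_assoc] using (hasDerivAt_pow (n + 1) s).const_mul (κ * ((n + 2 : ℕ) : ℝ))
  have h3 := h2.mul hp
  refine h3.congr_deriv ?_
  unfold XYpoly
  have hune : (ε + κ * s ^ (n + 2)) ≠ 0 := hu.ne'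
  push_cast
  field_simp
  ring


noncomputable def Gm (κ ε : ℝ) (n : ℕ) : ℝ → ℝ → ℝ := fun s t =>
  ((1 / 2) * ((t + ε / 2 + κ / 2 * |s| ^ (n + 2)) / (ε + κ * |s| ^ (n + 2)) - 1 / 2) ^ 2 - 1 / 8) *
    deriv (fun x : ℝ => ε + κ * |x| ^ (n + 2)) s

lemma fpart_eq {κ ε : ℝ} (n : ℕ) (t : ℝ) {x : ℝ} (hux : 0 < ε + κ * |x| ^ (n + 2)) :
    (1 / 2) * ((t + ε / 2 + κ / 2 * |x| ^ (n + 2)) / (ε + κ * |x| ^ (n + 2)) - 1 / 2) ^ 2 - 1 / 8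
      = (1 / 2) * (t / (ε + κ * |x| ^ (n + 2))) ^ 2 - 1 / 8 := by
  have h : (t + ε / 2 + κ / 2 * |x| ^ (n + 2)) / (ε + κ * |x| ^ (n + 2)) - 1 / 2
      = t / (ε + κ * |x| ^ (n + 2)) := by
    field_simp
    ring
  rw [h]

lemma pd1_pos (κ ε : ℝ) (n : ℕ) (t : ℝ) (hκ : 0 < κ) (hε : 0 < ε) {s : ℝ} (hs : 0 < s) :
    pd1 (Gm κ ε n) s t = XYf κ ε n s t := by
  have hev : (fun x => Gm κ ε n x t) =ᶠ[nhds s]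
      (fun x : ℝ => ((1 / 2) * (t / (ε + κ * x ^ (n + 2))) ^ 2 - 1 / 8) *
        (κ * ((n + 2 : ℕ) : ℝ) * x ^ (n + 1))) := by
    filter_upwards [eventually_gt_nhds hs] with x hx
    have hux : 0 < ε + κ * |x| ^ (n + 2) := by positivity
    unfold Gm
    rw [fpart_eq n t hux, deriv_dl_pos κ ε n hx, abs_of_pos hx]
    ring
  have hu : 0 < ε + κ * s ^ (n + 2) := by
    have := dl_pos hκ hε n s; unfold dl at this; rwa [abs_of_pos hs] at this
  unfold pd1
  rw [hev.deriv_eq, (hasDerivAt_phi κ ε n t hu).deriv]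
  unfold XYpoly XYf Af Bf dl
  rw [abs_of_pos hs]

lemma pd1_neg (κ ε : ℝ) (n : ℕ) (t : ℝ) (hκ : 0 < κ) (hε : 0 < ε) {s : ℝ} (hs : s < 0) :
    pd1 (Gm κ ε n) s t = XYf κ ε n s t := by
  have ha : (0:ℝ) < -s := by linarith
  have hu : 0 < ε + κ * (-s) ^ (n + 2) := by positivity
  have hφ := hasDerivAt_phi κ ε n t hu
  have hneg : HasDerivAt (fun x : ℝ => -x) (-1) s := (hasDerivAt_id s).neg
  have h1 : HasDerivAt (fun x : ℝ => ((1 / 2) * (t / (ε + κ * (-x) ^ (n + 2))) ^ 2 - 1 / 8) *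
      (κ * ((n + 2 : ℕ) : ℝ) * (-x) ^ (n + 1))) (XYpoly κ ε n (-s) t * (-1)) s := hφ.comp s hneg
  have h2 := h1.fun_neg
  have hev : (fun x => Gm κ ε n x t) =ᶠ[nhds s]
      (fun x : ℝ => -(((1 / 2) * (t / (ε + κ * (-x) ^ (n + 2))) ^ 2 - 1 / 8) *
        (κ * ((n + 2 : ℕ) : ℝ) * (-x) ^ (n + 1)))) := by
    filter_upwards [eventually_lt_nhds hs] with x hx
    have hux : 0 < ε + κ * |x| ^ (n + 2) := by positivity
    unfold Gm
    rw [fpart_eq n t hux, deriv_dl_neg κ ε n hx, abs_of_neg hx]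
    ring
  unfold pd1
  rw [hev.deriv_eq, h2.deriv]
  unfold XYpoly XYf Af Bf dl
  rw [abs_of_neg hs]
  ring

lemma pd2_eq (κ ε : ℝ) (n : ℕ) (t : ℝ) (hκ : 0 < κ) (hε : 0 < ε) (s : ℝ) :
    pd2 (Gm κ ε n) s t =
      (t / (ε + κ * |s| ^ (n + 2))) * (1 / (ε + κ * |s| ^ (n + 2))) *
        deriv (fun x : ℝ => ε + κ * |x| ^ (n + 2)) s := by
  have hu : 0 < ε + κ * |s| ^ (n + 2) := by positivity
  have h1 : HasDerivAt (fun t' : ℝ => t' + ε / 2 + κ / 2 * |s| ^ (n + 2)) 1 t :=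
    ((hasDerivAt_id t).add_const (ε / 2)).add_const _
  have h2 := h1.div_const (ε + κ * |s| ^ (n + 2))
  have h3 := (((h2.sub_const (1 / 2)).fun_pow 2).const_mul (1 / 2 : ℝ)).sub_const (1 / 8)
  have h4 := h3.mul_const (deriv (fun x : ℝ => ε + κ * |x| ^ (n + 2)) s)
  unfold pd2 Gm
  rw [h4.deriv]
  have h : (t + ε / 2 + κ / 2 * |s| ^ (n + 2)) / (ε + κ * |s| ^ (n + 2)) - 1 / 2
      = t / (ε + κ * |s| ^ (n + 2)) := by field_simp; ring
  rw [h]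
  ring

lemma pd2_sq (κ ε : ℝ) (n : ℕ) (t : ℝ) (hκ : 0 < κ) (hε : 0 < ε) {s : ℝ} (hs : s ≠ 0) :
    (pd2 (Gm κ ε n) s t) ^ 2 = t ^ 2 * Af κ n s / dl κ ε n s ^ 4 := by
  rw [pd2_eq κ ε n t hκ hε s]
  rcases hs.lt_or_gt with h | h
  · rw [deriv_dl_neg κ ε n h]
    unfold Af dl
    rw [abs_of_neg h]
    have hns : (0:ℝ) < -s := by linarith
    have hu : (0:ℝ) < ε + κ * (-s) ^ (n + 2) := by positivity
    field_simp
    push_cast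
    ring
  · rw [deriv_dl_pos κ ε n h]
    unfold Af dl
    rw [abs_of_pos h]
    have hu : (0:ℝ) < ε + κ * s ^ (n + 2) := by positivity
    field_simp
    push_cast
    ring

lemma alg (a b d t : ℝ) (ha : 0 ≤ a) (hb : 0 ≤ b) (hd : 0 < d) (ht : t ^ 2 ≤ d ^ 2 / 4) :
    (-(t ^ 2 * a / d ^ 3) + (t ^ 2 / (2 * d ^ 2) - 1 / 8) * b) ^ 2 + t ^ 2 * a / d ^ 4
      ≤ a ^ 2 / (8 * d ^ 2) + b ^ 2 / 32 + a / (4 * d ^ 2) := by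
  have hd6 : (0:ℝ) < d ^ 6 := by positivity
  have ht0 : (0:ℝ) ≤ t ^ 2 := sq_nonneg t
  have h1 : t ^ 2 * a * d ^ 2 ≤ a * d ^ 4 / 4 := by nlinarith [mul_nonneg ha (sq_nonneg d)]
  have ht4 : (t ^ 2) ^ 2 ≤ (d ^ 2 / 4) ^ 2 := pow_le_pow_left₀ ht0 ht 2
  have h2 : (t ^ 2 * a) ^ 2 ≤ a ^ 2 * d ^ 4 / 16 := by
    nlinarith [mul_le_mul_of_nonneg_right ht4 (sq_nonneg a)]
  have h3 : ((t ^ 2 * d / 2 - d ^ 3 / 8) * b) ^ 2 ≤ b ^ 2 * d ^ 6 / 64 := by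
    have hx2 : 0 ≤ d ^ 3 / 8 - t ^ 2 * d / 2 := by nlinarith
    have hxle : d ^ 3 / 8 - t ^ 2 * d / 2 ≤ d ^ 3 / 8 := by nlinarith [mul_nonneg ht0 hd.le]
    have hxsq : (d ^ 3 / 8 - t ^ 2 * d / 2) ^ 2 ≤ (d ^ 3 / 8) ^ 2 := pow_le_pow_left₀ hx2 hxle 2
    nlinarith [mul_le_mul_of_nonneg_right hxsq (sq_nonneg b)]
  have h4 : (-(t ^ 2 * a) + (t ^ 2 * d / 2 - d ^ 3 / 8) * b) ^ 2
      ≤ 2 * (t ^ 2 * a) ^ 2 + 2 * ((t ^ 2 * d / 2 - d ^ 3 / 8) * b) ^ 2 := by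
    nlinarith [sq_nonneg (t ^ 2 * a + (t ^ 2 * d / 2 - d ^ 3 / 8) * b)]
  have key : (-(t ^ 2 * a) + (t ^ 2 * d / 2 - d ^ 3 / 8) * b) ^ 2 + t ^ 2 * a * d ^ 2
      ≤ a ^ 2 * d ^ 4 / 8 + b ^ 2 * d ^ 6 / 32 + a * d ^ 4 / 4 := by linarith
  have hL : (-(t ^ 2 * a / d ^ 3) + (t ^ 2 / (2 * d ^ 2) - 1 / 8) * b) ^ 2 + t ^ 2 * a / d ^ 4
      = ((-(t ^ 2 * a) + (t ^ 2 * d / 2 - d ^ 3 / 8) * b) ^ 2 + t ^ 2 * a * d ^ 2) / d ^ 6 := by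
    field_simp
  have hR : a ^ 2 / (8 * d ^ 2) + b ^ 2 / 32 + a / (4 * d ^ 2)
      = (a ^ 2 * d ^ 4 / 8 + b ^ 2 * d ^ 6 / 32 + a * d ^ 4 / 4) / d ^ 6 := by
    field_simp
  rw [hL, hR]
  gcongr

noncomputable def Ff (κ ε : ℝ) (n : ℕ) (s t : ℝ) : ℝ :=
  XYf κ ε n s t ^ 2 + t ^ 2 * Af κ n s / dl κ ε n s ^ 4

noncomputable def Hf (κ ε : ℝ) (n : ℕ) (s : ℝ) : ℝ :=
  Af κ n s ^ 2 / (8 * dl κ ε n s ^ 2) + Bf κ n s ^ 2 / 32 + Af κ n s / (4 * dl κ ε n s ^ 2)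

noncomputable def Mconst (κ R : ℝ) (n : ℕ) : ℝ := 1 / 2 + κ * R ^ (n + 2)

noncomputable def Kconst (κ R : ℝ) (n : ℕ) : ℝ :=
  κ ^ 3 * ((n : ℝ) + 2) ^ 4 * R ^ (3 * n + 2) / 8 +
    Mconst κ R n * (κ ^ 2 * ((n : ℝ) + 2) ^ 2 * ((n : ℝ) + 1) ^ 2 * R ^ (2 * n)) / 32 +
    κ * ((n : ℝ) + 2) ^ 2 * R ^ n / 4

lemma Ff_le_Hf (κ ε : ℝ) (n : ℕ) (hκ : 0 < κ) (hε : 0 < ε) (s t : ℝ)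
    (ht : t ^ 2 ≤ dl κ ε n s ^ 2 / 4) : Ff κ ε n s t ≤ Hf κ ε n s := by
  have ha : 0 ≤ Af κ n s := by unfold Af; positivity
  have hb : 0 ≤ Bf κ n s := by unfold Bf; positivity
  have hd : 0 < dl κ ε n s := dl_pos hκ hε n s
  have := alg (Af κ n s) (Bf κ n s) (dl κ ε n s) t ha hb hd ht
  unfold Ff Hf XYf
  exact this

lemma core (κ R ε : ℝ) (n : ℕ) (hκ : 0 < κ) (hR : 0 < R) (hε : 0 < ε) (hε2 : ε < 1 / 2)
    {s : ℝ} (hsR : |s| ≤ R) : dl κ ε n s * Hf κ ε n s ≤ Kconst κ R n := by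
  have hd : 0 < dl κ ε n s := dl_pos hκ hε n s
  have h0 : (0:ℝ) ≤ |s| := abs_nonneg s
  have hdl_ge : κ * |s| ^ (n + 2) ≤ dl κ ε n s := by unfold dl; linarith
  have hdle : dl κ ε n s ≤ Mconst κ R n := by
    have : |s| ^ (n + 2) ≤ R ^ (n + 2) := pow_le_pow_left₀ h0 hsR _
    unfold dl Mconst
    nlinarith
  have heq : dl κ ε n s * Hf κ ε n s
      = Af κ n s ^ 2 / (8 * dl κ ε n s) + dl κ ε n s * Bf κ n s ^ 2 / 32 +
        Af κ n s / (4 * dl κ ε n s) := by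
    unfold Hf; field_simp
  have ha : 0 ≤ Af κ n s := by unfold Af; positivity
  -- bound 1
  have hb1 : Af κ n s ^ 2 ≤ (κ ^ 3 * ((n : ℝ) + 2) ^ 4 * R ^ (3 * n + 2)) * dl κ ε n s := by
    have e : Af κ n s ^ 2 = (κ ^ 3 * ((n : ℝ) + 2) ^ 4 * |s| ^ (3 * n + 2)) * (κ * |s| ^ (n + 2)) := by
      unfold Af; ring
    have hpow : |s| ^ (3 * n + 2) ≤ R ^ (3 * n + 2) := pow_le_pow_left₀ h0 hsR _
    have hc : (0:ℝ) ≤ κ ^ 3 * ((n : ℝ) + 2) ^ 4 := by positivity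
    calc Af κ n s ^ 2 = (κ ^ 3 * ((n : ℝ) + 2) ^ 4 * |s| ^ (3 * n + 2)) * (κ * |s| ^ (n + 2)) := e
      _ ≤ (κ ^ 3 * ((n : ℝ) + 2) ^ 4 * |s| ^ (3 * n + 2)) * dl κ ε n s := by
          apply mul_le_mul_of_nonneg_left hdl_ge; positivity
      _ ≤ (κ ^ 3 * ((n : ℝ) + 2) ^ 4 * R ^ (3 * n + 2)) * dl κ ε n s := by
          apply mul_le_mul_of_nonneg_right _ hd.le
          exact mul_le_mul_of_nonneg_left hpow hc
  have e1 : Af κ n s ^ 2 / (8 * dl κ ε n s) ≤ κ ^ 3 * ((n : ℝ) + 2) ^ 4 * R ^ (3 * n + 2) / 8 := by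
    rw [div_le_div_iff₀ (by positivity) (by norm_num)]
    nlinarith
  -- bound 2
  have hb2 : Bf κ n s ^ 2 ≤ κ ^ 2 * ((n : ℝ) + 2) ^ 2 * ((n : ℝ) + 1) ^ 2 * R ^ (2 * n) := by
    have e : Bf κ n s ^ 2 = κ ^ 2 * ((n : ℝ) + 2) ^ 2 * ((n : ℝ) + 1) ^ 2 * |s| ^ (2 * n) := by
      unfold Bf; ring
    have hpow : |s| ^ (2 * n) ≤ R ^ (2 * n) := pow_le_pow_left₀ h0 hsR _
    rw [e]
    apply mul_le_mul_of_nonneg_left hpow (by positivity)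
  have e2 : dl κ ε n s * Bf κ n s ^ 2 / 32
      ≤ Mconst κ R n * (κ ^ 2 * ((n : ℝ) + 2) ^ 2 * ((n : ℝ) + 1) ^ 2 * R ^ (2 * n)) / 32 := by
    have hM : (0:ℝ) ≤ Mconst κ R n := le_trans hd.le hdle
    have := mul_le_mul hdle hb2 (sq_nonneg _) hM
    linarith
  -- bound 3
  have hb3 : Af κ n s ≤ (κ * ((n : ℝ) + 2) ^ 2 * R ^ n) * dl κ ε n s := by
    have e : Af κ n s = (κ * ((n : ℝ) + 2) ^ 2 * |s| ^ n) * (κ * |s| ^ (n + 2)) := by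
      unfold Af; ring
    have hpow : |s| ^ n ≤ R ^ n := pow_le_pow_left₀ h0 hsR _
    calc Af κ n s = (κ * ((n : ℝ) + 2) ^ 2 * |s| ^ n) * (κ * |s| ^ (n + 2)) := e
      _ ≤ (κ * ((n : ℝ) + 2) ^ 2 * |s| ^ n) * dl κ ε n s := by
          apply mul_le_mul_of_nonneg_left hdl_ge; positivity
      _ ≤ (κ * ((n : ℝ) + 2) ^ 2 * R ^ n) * dl κ ε n s := by
          apply mul_le_mul_of_nonneg_right _ hd.le
          exact mul_le_mul_of_nonneg_left hpow (by positivity)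
  have e3 : Af κ n s / (4 * dl κ ε n s) ≤ κ * ((n : ℝ) + 2) ^ 2 * R ^ n / 4 := by
    rw [div_le_div_iff₀ (by positivity) (by norm_num)]
    nlinarith
  rw [heq]
  unfold Kconst
  linarith

lemma Kconst_pos (κ R : ℝ) (n : ℕ) (hκ : 0 < κ) (hR : 0 < R) : 0 < Kconst κ R n := by
  have hM : 0 < Mconst κ R n := by unfold Mconst; positivity
  unfold Kconst
  positivity

lemma cont_dl (κ ε : ℝ) (n : ℕ) : Continuous (dl κ ε n) := by
  unfold dl
  exact continuous_const.add (continuous_const.mul (continuous_abs.pow _))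

lemma cont_Af (κ : ℝ) (n : ℕ) : Continuous (Af κ n) := by
  unfold Af
  exact continuous_const.mul (continuous_abs.pow _)

lemma cont_Bf (κ : ℝ) (n : ℕ) : Continuous (Bf κ n) := by
  unfold Bf
  exact continuous_const.mul (continuous_abs.pow _)

lemma cont_Hf (κ ε : ℝ) (n : ℕ) (hκ : 0 < κ) (hε : 0 < ε) : Continuous (Hf κ ε n) := by
  have hne : ∀ s : ℝ, 8 * dl κ ε n s ^ 2 ≠ 0 := fun s => by
    have := dl_pos hκ hε n s; positivity
  have hne4 : ∀ s : ℝ, 4 * dl κ ε n s ^ 2 ≠ 0 := fun s => by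
    have := dl_pos hκ hε n s; positivity
  unfold Hf
  refine (((cont_Af κ n).pow 2).div (continuous_const.mul ((cont_dl κ ε n).pow 2)) hne).add
    (((cont_Bf κ n).pow 2).div_const 32) |>.add
    ((cont_Af κ n).div (continuous_const.mul ((cont_dl κ ε n).pow 2)) hne4)

lemma cont_Ff (κ ε : ℝ) (n : ℕ) (hκ : 0 < κ) (hε : 0 < ε) :
    Continuous (fun p : ℝ × ℝ => Ff κ ε n p.1 p.2) := by
  have hdl : Continuous (fun p : ℝ × ℝ => dl κ ε n p.1) := (cont_dl κ ε n).comp continuous_fst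
  have hA : Continuous (fun p : ℝ × ℝ => Af κ n p.1) := (cont_Af κ n).comp continuous_fst
  have hB : Continuous (fun p : ℝ × ℝ => Bf κ n p.1) := (cont_Bf κ n).comp continuous_fst
  have ht2 : Continuous (fun p : ℝ × ℝ => p.2 ^ 2) := continuous_snd.pow 2
  have hdlne3 : ∀ p : ℝ × ℝ, dl κ ε n p.1 ^ 3 ≠ 0 := fun p => by
    have := dl_pos hκ hε n p.1; positivity
  have hdlne2 : ∀ p : ℝ × ℝ, 2 * dl κ ε n p.1 ^ 2 ≠ 0 := fun p => by
    have := dl_pos hκ hε n p.1; positivity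
  have hdlne4 : ∀ p : ℝ × ℝ, dl κ ε n p.1 ^ 4 ≠ 0 := fun p => by
    have := dl_pos hκ hε n p.1; positivity
  have hXY : Continuous (fun p : ℝ × ℝ => XYf κ ε n p.1 p.2) := by
    unfold XYf
    exact (((ht2.mul hA).div (hdl.pow 3) hdlne3).neg).add
      (((ht2.div (continuous_const.mul (hdl.pow 2)) hdlne2).sub continuous_const).mul hB)
  unfold Ff
  exact (hXY.pow 2).add ((ht2.mul hA).div (hdl.pow 4) hdlne4)

/-- In the model narrow region `δ(x₁) = ε + κ|x₁|^m`, the energy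
`∫_{Ω_R} |∇(f(ū)·δ′)|² dx` of the corrector is bounded uniformly in `ε ∈ (0, 1/2)`. -/
theorem stmt16 (κ R : ℝ) (m : ℕ) (hκ : 0 < κ) (hR : 0 < R) (hm : 2 ≤ m) :
    ∃ C > 0, ∀ ε : ℝ, 0 < ε → ε < 1 / 2 →
      (let δ : ℝ → ℝ := fun s => ε + κ * |s| ^ m
       let ub : ℝ → ℝ → ℝ := fun s t => (t + ε / 2 + κ / 2 * |s| ^ m) / δ s
       let f : ℝ → ℝ := fun t => (1 / 2) * (t - 1 / 2) ^ 2 - 1 / 8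
       let g : ℝ → ℝ → ℝ := fun s t => f (ub s t) * deriv δ s
       (∫ p in {p : ℝ × ℝ | |p.1| < R ∧
            -ε / 2 - κ / 2 * |p.1| ^ m < p.2 ∧ p.2 < ε / 2 + κ / 2 * |p.1| ^ m},
          ((pd1 g p.1 p.2) ^ 2 + (pd2 g p.1 p.2) ^ 2)) ≤ C) := by
  obtain ⟨n, rfl⟩ : ∃ n, m = n + 2 := ⟨m - 2, by omega⟩
  have hK := Kconst_pos κ R n hκ hR
  refine ⟨2 * R * Kconst κ R n, by positivity, ?_⟩
  intro ε hε hε2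
  show (∫ p in {p : ℝ × ℝ | |p.1| < R ∧
        -ε / 2 - κ / 2 * |p.1| ^ (n + 2) < p.2 ∧ p.2 < ε / 2 + κ / 2 * |p.1| ^ (n + 2)},
      ((pd1 (Gm κ ε n) p.1 p.2) ^ 2 + (pd2 (Gm κ ε n) p.1 p.2) ^ 2)) ≤ 2 * R * Kconst κ R n
  set Ω : Set (ℝ × ℝ) := {p : ℝ × ℝ | |p.1| < R ∧
      -ε / 2 - κ / 2 * |p.1| ^ (n + 2) < p.2 ∧ p.2 < ε / 2 + κ / 2 * |p.1| ^ (n + 2)} with hΩdef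
  have hΩopen : IsOpen Ω := by
    have h1 : IsOpen {p : ℝ × ℝ | |p.1| < R} := isOpen_lt continuous_fst.abs continuous_const
    have h2 : IsOpen {p : ℝ × ℝ | -ε / 2 - κ / 2 * |p.1| ^ (n + 2) < p.2} :=
      isOpen_lt (continuous_const.sub (continuous_const.mul (continuous_fst.abs.pow _)))
        continuous_snd
    have h3 : IsOpen {p : ℝ × ℝ | p.2 < ε / 2 + κ / 2 * |p.1| ^ (n + 2)} :=
      isOpen_lt continuous_snd
        (continuous_const.add (continuous_const.mul (continuous_fst.abs.pow _)))
    exact h1.inter (h2.inter h3)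
  have hΩm : MeasurableSet Ω := hΩopen.measurableSet
  -- Step 1: replace the integrand by the explicit formula
  have hae : ∀ᵐ p : ℝ × ℝ, p.1 ≠ 0 := by
    rw [ae_iff]
    have hset : {p : ℝ × ℝ | ¬p.1 ≠ 0} = ({0} : Set ℝ) ×ˢ (Set.univ : Set ℝ) := by
      ext ⟨a, b⟩
      simp [Set.mem_prod, eq_comm]
    rw [hset, Measure.volume_eq_prod, Measure.prod_prod]
    simp
  have step1 : (∫ p in Ω, ((pd1 (Gm κ ε n) p.1 p.2) ^ 2 + (pd2 (Gm κ ε n) p.1 p.2) ^ 2))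
      = ∫ p in Ω, Ff κ ε n p.1 p.2 := by
    apply setIntegral_congr_ae hΩm
    filter_upwards [hae] with p hp _
    have h2 := pd2_sq κ ε n p.2 hκ hε hp
    unfold Ff
    rcases hp.lt_or_gt with h | h
    · rw [pd1_neg κ ε n p.2 hκ hε h, h2]
    · rw [pd1_pos κ ε n p.2 hκ hε h, h2]
  rw [step1]
  -- integrability on the box
  have hsub : Ω ⊆ Set.Icc ((-R, -(Mconst κ R n)) : ℝ × ℝ) (R, Mconst κ R n) := by
    rintro ⟨s, t⟩ ⟨h1, h2, h3⟩
    have hsR : -R ≤ s ∧ s ≤ R := ⟨(abs_lt.mp h1).1.le, (abs_lt.mp h1).2.le⟩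
    have hpow : |s| ^ (n + 2) ≤ R ^ (n + 2) := pow_le_pow_left₀ (abs_nonneg s) h1.le _
    have hpow0 : (0:ℝ) ≤ |s| ^ (n + 2) := by positivity
    have hM : ε / 2 + κ / 2 * |s| ^ (n + 2) ≤ Mconst κ R n := by
      unfold Mconst; nlinarith
    constructor
    · exact ⟨hsR.1, by simp only []; nlinarith⟩
    · exact ⟨hsR.2, by simp only []; nlinarith⟩
  have hHfint : IntegrableOn (fun p : ℝ × ℝ => Hf κ ε n p.1) Ω volume := by
    apply IntegrableOn.mono_set _ hsub
    exact (((cont_Hf κ ε n hκ hε).comp continuous_fst).continuousOn).integrableOn_compact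
      isCompact_Icc
  have hFfint : IntegrableOn (fun p : ℝ × ℝ => Ff κ ε n p.1 p.2) Ω volume := by
    apply IntegrableOn.mono_set _ hsub
    exact ((cont_Ff κ ε n hκ hε).continuousOn).integrableOn_compact isCompact_Icc
  -- Step 2: pointwise comparison
  have step2 : (∫ p in Ω, Ff κ ε n p.1 p.2) ≤ ∫ p in Ω, Hf κ ε n p.1 := by
    apply setIntegral_mono_on hFfint hHfint hΩm
    rintro ⟨s, t⟩ ⟨h1, h2, h3⟩
    apply Ff_le_Hf κ ε n hκ hε
    have hd : dl κ ε n s = ε + κ * |s| ^ (n + 2) := rfl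
    nlinarith [abs_nonneg s, mul_nonneg hκ.le (pow_nonneg (abs_nonneg s) (n+2))]
  refine le_trans step2 ?_
  -- Step 3: Fubini
  have hind : Integrable (Ω.indicator fun p : ℝ × ℝ => Hf κ ε n p.1) volume :=
    (integrable_indicator_iff hΩm).mpr hHfint
  rw [← integral_indicator hΩm, Measure.volume_eq_prod]
  have hind' : Integrable (Ω.indicator fun p : ℝ × ℝ => Hf κ ε n p.1)
      ((volume : Measure ℝ).prod volume) := by
    rwa [Measure.volume_eq_prod] at hind
  rw [integral_prod _ hind']
  have hKnn : (0:ℝ) ≤ Kconst κ R n := hK.le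
  have inner_le : ∀ x : ℝ, (∫ y : ℝ, (Ω.indicator fun p : ℝ × ℝ => Hf κ ε n p.1) (x, y))
      ≤ (Set.Ioo (-R) R).indicator (fun _ => Kconst κ R n) x := by
    intro x
    by_cases hx : x ∈ Set.Ioo (-R) R
    · have habs : |x| < R := abs_lt.mpr ⟨hx.1, hx.2⟩
      have hdx : 0 < dl κ ε n x := dl_pos hκ hε n x
      have heqf : (fun y => (Ω.indicator fun p : ℝ × ℝ => Hf κ ε n p.1) (x, y))
          = (Set.Ioo (-(dl κ ε n x) / 2) (dl κ ε n x / 2)).indicator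
              (fun _ => Hf κ ε n x) := by
        funext y
        have hdl : dl κ ε n x = ε + κ * |x| ^ (n + 2) := rfl
        by_cases hy : y ∈ Set.Ioo (-(dl κ ε n x) / 2) (dl κ ε n x / 2)
        · rw [Set.indicator_of_mem hy, Set.indicator_of_mem]
          refine ⟨habs, ?_, ?_⟩
          · have := hy.1; rw [hdl] at this; linarith
          · have := hy.2; rw [hdl] at this; linarith
        · rw [Set.indicator_of_notMem hy, Set.indicator_of_notMem]
          rintro ⟨_, hmem2, hmem3⟩
          apply hy
          rw [hdl]
          exact ⟨by simp only [Set.mem_Ioo] at *; linarith, by linarith⟩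
      rw [heqf, integral_indicator_const _ measurableSet_Ioo, measureReal_def, Real.volume_Ioo,
        Set.indicator_of_mem hx, smul_eq_mul]
      have hlen : (dl κ ε n x / 2 - -(dl κ ε n x) / 2) = dl κ ε n x := by ring
      rw [hlen, ENNReal.toReal_ofReal hdx.le]
      exact core κ R ε n hκ hR hε hε2 habs.le
    · have heqf : (fun y => (Ω.indicator fun p : ℝ × ℝ => Hf κ ε n p.1) (x, y))
          = fun _ => (0:ℝ) := by
        funext y
        apply Set.indicator_of_notMem
        rintro ⟨hmem1, -, -⟩
        exact hx ⟨(abs_lt.mp hmem1).1, (abs_lt.mp hmem1).2⟩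
      rw [heqf, Set.indicator_of_notMem hx, integral_zero]
  have hconst_int : Integrable ((Set.Ioo (-R) R).indicator fun _ : ℝ => Kconst κ R n) volume := by
    rw [integrable_indicator_iff measurableSet_Ioo]
    apply (integrableOn_const_iff (C := Kconst κ R n)).mpr
    right
    rw [Real.volume_Ioo]
    exact ENNReal.ofReal_lt_top
  calc (∫ x : ℝ, ∫ y : ℝ, (Ω.indicator fun p : ℝ × ℝ => Hf κ ε n p.1) (x, y))
      ≤ ∫ x : ℝ, (Set.Ioo (-R) R).indicator (fun _ => Kconst κ R n) x :=
        integral_mono (hind'.integral_prod_left) hconst_int inner_le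
    _ = 2 * R * Kconst κ R n := by
        rw [integral_indicator_const _ measurableSet_Ioo, measureReal_def, Real.volume_Ioo, smul_eq_mul,
          ENNReal.toReal_ofReal (by linarith : (0:ℝ) ≤ R - -R)]
        ring
end
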